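/- arXiv:2403.04630 — 2 statements merged into one kernel-verified Lean document; each statement's English description precedes it below -/
import Mathlib

section
/- Let T, D ∈ ℕ. For every pair of edge-neighboring insertion-only graph streams S, S' of length T and every time step t ∈ [T], the edge distance between the BBDS-projected streams satisfies d_edge(Π^BBDS_D(S)_[t], Π^BBDS_D(S')_[t]) ≤ 3. -/
open Finset

/-- A finite graph: a finite vertex set together with a finite set of undirected edges. -/
structure FinGraph where
  verts : Finset ℕ
  edges : Finset (Sym2 ℕ)

namespace FinGraph

/-- A finite graph is valid if every edge is a non-loop both of whose endpoints are vertices. -/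
def Valid (G : FinGraph) : Prop :=
  ∀ e ∈ G.edges, ¬ e.IsDiag ∧ ∀ v ∈ e, v ∈ G.verts

/-- The degree of a vertex: the number of edges containing it. -/
def degree (G : FinGraph) (v : ℕ) : ℕ :=
  (G.edges.filter (fun e => v ∈ e)).card

/-- Remove a node and all of its adjacent edges. -/
def removeNode (G : FinGraph) (v : ℕ) : FinGraph :=
  ⟨G.verts.erase v, G.edges.filter (fun e => v ∉ e)⟩

/-- Remove a single edge. -/
def removeEdge (G : FinGraph) (e : Sym2 ℕ) : FinGraph :=
  ⟨G.verts, G.edges.erase e⟩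

/-- `G` is `(D, ℓ)`-bounded: it has at most `ℓ` nodes of degree greater than `D`. -/
def DLBounded (G : FinGraph) (D ℓ : ℕ) : Prop :=
  (G.verts.filter (fun v => D < G.degree v)).card ≤ ℓ

end FinGraph

/-- One graph is obtained from the other by removing one node and all of its adjacent edges. -/
def nodeNeighborGraph (G G' : FinGraph) : Prop :=
  (∃ v ∈ G.verts, G' = G.removeNode v) ∨ (∃ v ∈ G'.verts, G = G'.removeNode v)

/-- `G'` is obtained from `G` by removing a single edge, an isolated node,
or a degree-one node together with its adjacent edge. -/
def edgeRemovalGraph (G G' : FinGraph) : Prop :=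
  (∃ e ∈ G.edges, G' = G.removeEdge e) ∨
  (∃ v ∈ G.verts, G.degree v = 0 ∧ G' = FinGraph.mk (G.verts.erase v) G.edges) ∨
  (∃ v ∈ G.verts, G.degree v = 1 ∧ G' = G.removeNode v)

/-- Edge-neighboring graphs. -/
def edgeNeighborGraph (G G' : FinGraph) : Prop :=
  edgeRemovalGraph G G' ∨ edgeRemovalGraph G' G

/-- The length of a shortest chain of valid graphs from `A` to `B` in which
consecutive graphs are related by `R`. -/
noncomputable def graphChainDist (R : FinGraph → FinGraph → Prop) (A B : FinGraph) : ℕ :=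
  sInf {n | ∃ f : ℕ → FinGraph, f 0 = A ∧ f n = B ∧ (∀ i ≤ n, (f i).Valid) ∧
    ∀ i < n, R (f i) (f (i + 1))}

/-- Node distance between finite graphs. -/
noncomputable def graphNodeDist : FinGraph → FinGraph → ℕ := graphChainDist nodeNeighborGraph

/-- Edge distance between finite graphs. -/
noncomputable def graphEdgeDist : FinGraph → FinGraph → ℕ := graphChainDist edgeNeighborGraph

/-- An insertion-only graph stream: the nodes and edges arriving at each time step. -/
structure GraphStream where
  nodes : ℕ → Finset ℕ
  edges : ℕ → Finset (Sym2 ℕ)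

namespace GraphStream

/-- Validity of a graph stream of length `T`: arrivals happen only at times `1, …, T`,
no node or edge arrives twice, and every edge is a non-loop whose endpoints
arrive at or before the edge does. -/
def Valid (T : ℕ) (S : GraphStream) : Prop :=
  (∀ t, ((S.nodes t).Nonempty ∨ (S.edges t).Nonempty) → 1 ≤ t ∧ t ≤ T) ∧
  (∀ s t, s ≠ t → Disjoint (S.nodes s) (S.nodes t)) ∧
  (∀ s t, s ≠ t → Disjoint (S.edges s) (S.edges t)) ∧
  (∀ t, ∀ e ∈ S.edges t, ¬ e.IsDiag ∧ ∀ v ∈ e, ∃ s ≤ t, v ∈ S.nodes s)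

/-- The flattened graph of the stream through time `t`. -/
def flat (S : GraphStream) (t : ℕ) : FinGraph :=
  ⟨(Finset.range (t + 1)).biUnion S.nodes, (Finset.range (t + 1)).biUnion S.edges⟩

/-- Remove a node and all of its adjacent edges from a stream. -/
def removeNode (S : GraphStream) (v : ℕ) : GraphStream :=
  ⟨fun t => (S.nodes t).erase v, fun t => (S.edges t).filter (fun e => v ∉ e)⟩

/-- Remove a single edge from a stream. -/
def removeEdge (S : GraphStream) (e : Sym2 ℕ) : GraphStream :=
  ⟨S.nodes, fun t => (S.edges t).erase e⟩

/-- Truncation of a stream: keep only arrivals at times `≤ t`. -/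
def trunc (S : GraphStream) (t : ℕ) : GraphStream :=
  ⟨fun s => if s ≤ t then S.nodes s else ∅, fun s => if s ≤ t then S.edges s else ∅⟩

/-- `v` arrives at some point in the stream. -/
def hasNode (S : GraphStream) (v : ℕ) : Prop :=
  ∃ t, v ∈ S.nodes t

/-- The stream is `(D, ℓ)`-bounded through time `t`. -/
def DLBoundedThrough (S : GraphStream) (D ℓ t : ℕ) : Prop :=
  (S.flat t).DLBounded D ℓ

end GraphStream

/-- `S'` is obtained from `S` by removing one node and all of its adjacent edges
(which may arrive at many time steps). -/
def nodeRemovalStream (S S' : GraphStream) : Prop :=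
  ∃ v, S.hasNode v ∧ S' = S.removeNode v

/-- Node-neighboring streams. -/
def nodeNeighborStream (S S' : GraphStream) : Prop :=
  nodeRemovalStream S S' ∨ nodeRemovalStream S' S

/-- `S'` is obtained from the length-`T` stream `S` by removing a single edge,
an isolated node, or a degree-one node together with its adjacent edge. -/
def edgeRemovalStream (T : ℕ) (S S' : GraphStream) : Prop :=
  (∃ t, ∃ e ∈ S.edges t, S' = S.removeEdge e) ∨
  (∃ v, S.hasNode v ∧ (S.flat T).degree v ≤ 1 ∧ S' = S.removeNode v)

/-- Edge-neighboring streams (of length `T`). -/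
def edgeNeighborStream (T : ℕ) (S S' : GraphStream) : Prop :=
  edgeRemovalStream T S S' ∨ edgeRemovalStream T S' S

/-- Length of a shortest chain of valid streams of length `T` in which consecutive
streams are related by `R`. -/
noncomputable def streamChainDist (T : ℕ) (R : GraphStream → GraphStream → Prop)
    (A B : GraphStream) : ℕ :=
  sInf {n | ∃ f : ℕ → GraphStream, f 0 = A ∧ f n = B ∧ (∀ i ≤ n, (f i).Valid T) ∧
    ∀ i < n, R (f i) (f (i + 1))}

/-- Node distance between streams of length `T`. -/
noncomputable def streamNodeDist (T : ℕ) : GraphStream → GraphStream → ℕ :=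
  streamChainDist T nodeNeighborStream

/-- Edge distance between streams of length `T`. -/
noncomputable def streamEdgeDist (T : ℕ) : GraphStream → GraphStream → ℕ :=
  streamChainDist T (edgeNeighborStream T)

/-- A fixed injective key on undirected edges, providing the consistent total order in
which edges arriving at the same time step are processed. -/
def edgeKey : Sym2 ℕ → ℕ :=
  Sym2.lift ⟨fun a b => Nat.pair (min a b) (max a b), fun a b => by
    dsimp only; rw [inf_comm, sup_comm]⟩

/-- The two endpoints of an edge, as an ordered pair. -/
def endpointsOf (e : Sym2 ℕ) : ℕ × ℕ := (edgeKey e).unpair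

/-- The edges of a finite edge set, listed in increasing `edgeKey` order. -/
def sortEdges (E : Finset (Sym2 ℕ)) : List (Sym2 ℕ) :=
  ((E.image edgeKey).sort (· ≤ ·)).map fun k => s(k.unpair.1, k.unpair.2)

/-- All edges of a stream of length `T`, tagged with their arrival times, in processing
order: lexicographically by (arrival time, consistent edge order). -/
def GraphStream.procList (S : GraphStream) (T : ℕ) : List (ℕ × Sym2 ℕ) :=
  (List.range (T + 1)).flatMap fun t => (sortEdges (S.edges t)).map fun e => (t, e)

/-- One step of the greedy projection with degree bound `D`.  The state consists of the
degree counters together with the edges kept so far (indexed by arrival time).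
If `bbds = true` the counters of the endpoints are incremented for every processed edge
(the BBDS rule); if `bbds = false` they are incremented only when the edge is kept
(the DLL rule). -/
def projStep (D : ℕ) (bbds : Bool) (st : (ℕ → ℕ) × (ℕ → Finset (Sym2 ℕ)))
    (p : ℕ × Sym2 ℕ) : (ℕ → ℕ) × (ℕ → Finset (Sym2 ℕ)) :=
  let d := st.1
  let u := (endpointsOf p.2).1
  let v := (endpointsOf p.2).2
  let keep : Bool := decide (d u < D ∧ d v < D)
  ((if bbds || keep then fun w => if w = u ∨ w = v then d w + 1 else d w else d),
   (if keep then fun s => if s = p.1 then insert p.2 (st.2 s) else st.2 s else st.2))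

/-- The time-aware projection with degree bound `D` on streams of length `T`:
the BBDS projection if `bbds = true` and the DLL projection if `bbds = false`.
All arriving nodes are kept; an arriving edge is kept (at its arrival time) iff both of
its endpoints have counter value `< D` when the edge is processed. -/
def project (bbds : Bool) (D T : ℕ) (S : GraphStream) : GraphStream :=
  ⟨S.nodes,
   ((S.procList T).foldl (projStep D bbds)
      ((fun _ => 0 : ℕ → ℕ), (fun _ => ∅ : ℕ → Finset (Sym2 ℕ)))).2⟩

/-- The BBDS projection `Π^BBDS_D` on streams of length `T`. -/
def projBBDS (D T : ℕ) : GraphStream → GraphStream := project true D T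

/-- The DLL projection `Π^DLL_D` on streams of length `T`. -/
def projDLL (D T : ℕ) : GraphStream → GraphStream := project false D T

section BBDSAux
open List

namespace BBDS

lemma edgeKey_recon (e : Sym2 ℕ) : s((edgeKey e).unpair.1, (edgeKey e).unpair.2) = e := by
  induction e using Sym2.inductionOn with
  | hf a b =>
    have h : edgeKey s(a, b) = Nat.pair (min a b) (max a b) := rfl
    rw [h, Nat.unpair_pair]
    rcases le_total a b with hab | hab
    · rw [min_eq_left hab, max_eq_right hab]
    · rw [min_eq_right hab, max_eq_left hab]; exact Sym2.eq_swap

lemma edgeKey_inj : Function.Injective edgeKey := fun e₁ e₂ h => by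
  rw [← edgeKey_recon e₁, ← edgeKey_recon e₂, h]

lemma mem_sortEdges {E : Finset (Sym2 ℕ)} {e : Sym2 ℕ} : e ∈ sortEdges E ↔ e ∈ E := by
  constructor
  · intro h
    simp only [sortEdges] at h
    obtain ⟨k, hk, rfl⟩ := List.mem_map.mp h
    rw [Finset.mem_sort] at hk
    obtain ⟨e', he', rfl⟩ := Finset.mem_image.mp hk
    rw [edgeKey_recon]; exact he'
  · intro h
    simp only [sortEdges]
    exact List.mem_map.mpr ⟨edgeKey e, (Finset.mem_sort _).mpr (Finset.mem_image_of_mem _ h),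
      edgeKey_recon e⟩

lemma sortEdges_erase {E : Finset (Sym2 ℕ)} {e0 : Sym2 ℕ} (h : e0 ∈ E) :
    ∃ E1 E2, sortEdges E = E1 ++ e0 :: E2 ∧ sortEdges (E.erase e0) = E1 ++ E2 := by
  have himg : (E.erase e0).image edgeKey = (E.image edgeKey).erase (edgeKey e0) :=
    Finset.image_erase edgeKey_inj E e0
  have hperm : ((E.image edgeKey).erase (edgeKey e0)).sort (· ≤ ·) ~
      ((E.image edgeKey).sort (· ≤ ·)).erase (edgeKey e0) := by
    rw [← Multiset.coe_eq_coe, ← Multiset.coe_erase, Finset.sort_eq, Finset.sort_eq,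
      Finset.erase_val]
  have hsorted : (((E.image edgeKey).sort (· ≤ ·)).erase (edgeKey e0)).Pairwise (· ≤ ·) :=
    List.Pairwise.sublist List.erase_sublist (Finset.pairwise_sort _ _)
  have hsort : ((E.erase e0).image edgeKey).sort (· ≤ ·) =
      ((E.image edgeKey).sort (· ≤ ·)).erase (edgeKey e0) := by
    rw [himg]
    exact List.Perm.eq_of_pairwise' (Finset.pairwise_sort _ _) hsorted hperm
  have hk0 : edgeKey e0 ∈ (E.image edgeKey).sort (· ≤ ·) :=
    (Finset.mem_sort _).mpr (Finset.mem_image_of_mem _ h)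
  obtain ⟨l1, l2, -, hl, hl'⟩ := List.exists_erase_eq hk0
  refine ⟨l1.map (fun k => s(k.unpair.1, k.unpair.2)), l2.map (fun k => s(k.unpair.1, k.unpair.2)),
    ?_, ?_⟩
  · simp only [sortEdges, hl, List.map_append, List.map_cons, edgeKey_recon]
  · simp only [sortEdges, hsort, hl', List.map_append]

lemma mem_procList {S : GraphStream} {T : ℕ} {p : ℕ × Sym2 ℕ} (h : p ∈ S.procList T) :
    p.2 ∈ S.edges p.1 := by
  simp only [GraphStream.procList, List.mem_flatMap, List.mem_map, List.mem_range] at h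
  obtain ⟨t', _, e, he, rfl⟩ := h
  exact mem_sortEdges.mp he

end BBDS
end BBDSAux
section BBDSAux2
open List
namespace BBDS

/-- Increment counters at both endpoints of `e`. -/
def bump (c : ℕ → ℕ) (e : Sym2 ℕ) : ℕ → ℕ :=
  fun w => if w = (endpointsOf e).1 ∨ w = (endpointsOf e).2 then c w + 1 else c w

/-- Increment the counter at `x`. -/
def addx (x : ℕ) (c : ℕ → ℕ) : ℕ → ℕ := fun w => if w = x then c w + 1 else c w

/-- The BBDS keep decision. -/
def keepB (D : ℕ) (c : ℕ → ℕ) (e : Sym2 ℕ) : Bool :=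
  decide (c (endpointsOf e).1 < D ∧ c (endpointsOf e).2 < D)

/-- The list of kept (time, edge) pairs, processing with counters `c`. -/
def keptL (D : ℕ) : (ℕ → ℕ) → List (ℕ × Sym2 ℕ) → List (ℕ × Sym2 ℕ)
  | _, [] => []
  | c, p :: L => if keepB D c p.2 then p :: keptL D (bump c p.2) L else keptL D (bump c p.2) L

@[simp] lemma keptL_nil {D : ℕ} {c : ℕ → ℕ} : keptL D c [] = [] := rfl

lemma keptL_cons {D : ℕ} {c : ℕ → ℕ} {p : ℕ × Sym2 ℕ} {L : List (ℕ × Sym2 ℕ)} :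
    keptL D c (p :: L) =
      if keepB D c p.2 then p :: keptL D (bump c p.2) L else keptL D (bump c p.2) L := rfl

/-- Counters after processing a list. -/
def cAfter (c : ℕ → ℕ) (L : List (ℕ × Sym2 ℕ)) : ℕ → ℕ :=
  L.foldl (fun c p => bump c p.2) c

lemma keptL_sublist {D : ℕ} : ∀ (L : List (ℕ × Sym2 ℕ)) (c : ℕ → ℕ), (keptL D c L).Sublist L := by
  intro L
  induction L with
  | nil => intro c; simp
  | cons p L ih =>
    intro c
    rw [keptL_cons]
    split
    · exact (ih _).cons₂ p
    · exact (ih _).cons p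

lemma keptL_append {D : ℕ} : ∀ (L1 L2 : List (ℕ × Sym2 ℕ)) (c : ℕ → ℕ),
    keptL D c (L1 ++ L2) = keptL D c L1 ++ keptL D (cAfter c L1) L2 := by
  intro L1
  induction L1 with
  | nil => intro L2 c; simp [cAfter]
  | cons p L1 ih =>
    intro L2 c
    rw [List.cons_append, keptL_cons, keptL_cons]
    have hca : cAfter c (p :: L1) = cAfter (bump c p.2) L1 := rfl
    rw [hca]
    split
    · rw [List.cons_append, ih]
    · rw [ih]

lemma bump_addx (c : ℕ → ℕ) (x : ℕ) (e : Sym2 ℕ) :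
    bump (addx x c) e = addx x (bump c e) := by
  funext w
  simp only [bump, addx]
  split_ifs <;> rfl

lemma le_bump (c : ℕ → ℕ) (e : Sym2 ℕ) (w : ℕ) : c w ≤ bump c e w := by
  simp only [bump]; split_ifs <;> omega

lemma le_addx (c : ℕ → ℕ) (x w : ℕ) : c w ≤ addx x c w := by
  simp only [addx]; split_ifs <;> omega

lemma keepB_true_iff {D : ℕ} {c : ℕ → ℕ} {e : Sym2 ℕ} :
    keepB D c e = true ↔ (c (endpointsOf e).1 < D ∧ c (endpointsOf e).2 < D) := by
  simp [keepB]

lemma keepB_mono {D : ℕ} {c c' : ℕ → ℕ} {e : Sym2 ℕ} (h : ∀ w, c w ≤ c' w)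
    (h' : keepB D c' e = true) : keepB D c e = true := by
  rw [keepB_true_iff] at h' ⊢
  exact ⟨lt_of_le_of_lt (h _) h'.1, lt_of_le_of_lt (h _) h'.2⟩

lemma keepB_addx_ge {D : ℕ} {c : ℕ → ℕ} {x : ℕ} (h : D ≤ c x) (e : Sym2 ℕ) :
    keepB D (addx x c) e = keepB D c e := by
  have key : ∀ y, (addx x c y < D ↔ c y < D) := by
    intro y
    simp only [addx]
    split_ifs with hy
    · subst hy; omega
    · rfl
  simp only [keepB, decide_eq_decide, key]

lemma keptL_addx_ge {D : ℕ} {x : ℕ} : ∀ (L : List (ℕ × Sym2 ℕ)) (c : ℕ → ℕ), D ≤ c x →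
    keptL D (addx x c) L = keptL D c L := by
  intro L
  induction L with
  | nil => intros; simp
  | cons p L ih =>
    intro c h
    rw [keptL_cons, keptL_cons, keepB_addx_ge h, bump_addx,
      ih _ (le_trans h (le_bump c p.2 x))]

/-- `K'` is obtained from `K` by deleting at most one element. -/
def Del1 (K K' : List (ℕ × Sym2 ℕ)) : Prop :=
  K' = K ∨ ∃ A p B, K = A ++ p :: B ∧ K' = A ++ B

lemma Del1_cons {K K' : List (ℕ × Sym2 ℕ)} {p : ℕ × Sym2 ℕ} (h : Del1 K K') :
    Del1 (p :: K) (p :: K') := by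
  rcases h with rfl | ⟨A, q, B, rfl, rfl⟩
  · exact Or.inl rfl
  · exact Or.inr ⟨p :: A, q, B, rfl, rfl⟩

lemma keptL_addx_del {D : ℕ} : ∀ (L : List (ℕ × Sym2 ℕ)) (c : ℕ → ℕ) (x : ℕ),
    Del1 (keptL D c L) (keptL D (addx x c) L) := by
  intro L
  induction L with
  | nil => intros; exact Or.inl rfl
  | cons p L ih =>
    intro c x
    by_cases hk2 : keepB D (addx x c) p.2 = true
    · have hk1 : keepB D c p.2 = true := keepB_mono (le_addx c x) hk2
      rw [keptL_cons, keptL_cons, if_pos hk1, if_pos hk2, bump_addx]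
      exact Del1_cons (ih _ _)
    · by_cases hk1 : keepB D c p.2 = true
      · -- the keep decision flips: afterwards the counter at x is ≥ D
        have hx : D ≤ bump c p.2 x := by
          rw [keepB_true_iff] at hk1
          have h2 : ¬ (addx x c (endpointsOf p.2).1 < D ∧ addx x c (endpointsOf p.2).2 < D) := by
            intro hc; exact hk2 (keepB_true_iff.mpr hc)
          simp only [addx] at h2
          simp only [bump]
          by_cases hu : (endpointsOf p.2).1 = x <;> by_cases hv : (endpointsOf p.2).2 = x <;>
            split_ifs <;> simp_all <;> omega
        rw [keptL_cons, keptL_cons, if_pos hk1, if_neg hk2, bump_addx, keptL_addx_ge _ _ hx]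
        exact Or.inr ⟨[], p, keptL D (bump c p.2) L, rfl, rfl⟩
      · rw [keptL_cons, keptL_cons, if_neg hk1, if_neg hk2, bump_addx]
        exact ih _ _

lemma bump_eq_addx_of_diag {c : ℕ → ℕ} {e : Sym2 ℕ} (h : (endpointsOf e).1 = (endpointsOf e).2) :
    bump c e = addx (endpointsOf e).1 c := by
  funext w
  simp only [bump, addx, ← h, or_self]

lemma bump_eq_addx_addx {c : ℕ → ℕ} {e : Sym2 ℕ} (h : (endpointsOf e).1 ≠ (endpointsOf e).2) :
    bump c e = addx (endpointsOf e).1 (addx (endpointsOf e).2 c) := by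
  funext w
  simp only [bump, addx]
  by_cases hu : w = (endpointsOf e).1 <;> by_cases hv : w = (endpointsOf e).2 <;>
    simp_all

lemma keptL_bump_del {D : ℕ} (L : List (ℕ × Sym2 ℕ)) (c : ℕ → ℕ) (e : Sym2 ℕ) :
    ∃ mid, Del1 (keptL D c L) mid ∧ Del1 mid (keptL D (bump c e) L) := by
  by_cases h : (endpointsOf e).1 = (endpointsOf e).2
  · refine ⟨keptL D (bump c e) L, ?_, Or.inl rfl⟩
    rw [bump_eq_addx_of_diag h]
    exact keptL_addx_del _ _ _
  · refine ⟨keptL D (addx (endpointsOf e).2 c) L, keptL_addx_del _ _ _, ?_⟩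
    rw [bump_eq_addx_addx h]
    exact keptL_addx_del _ _ _

end BBDS
end BBDSAux2
section BBDSAux3
open List
namespace BBDS

/-- The edges at time `s` in a finset of (time, edge) pairs. -/
def img (s : ℕ) (F : Finset (ℕ × Sym2 ℕ)) : Finset (Sym2 ℕ) :=
  (F.filter (fun p => p.1 = s)).image Prod.snd

lemma mem_img {e : Sym2 ℕ} {s : ℕ} {F : Finset (ℕ × Sym2 ℕ)} :
    e ∈ img s F ↔ (s, e) ∈ F := by
  simp only [img, Finset.mem_image, Finset.mem_filter]
  constructor
  · rintro ⟨⟨a1, a2⟩, ⟨hF, h1⟩, h2⟩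
    simp only at h1 h2
    subst h1; subst h2; exact hF
  · intro h; exact ⟨(s, e), ⟨h, rfl⟩, rfl⟩

lemma img_mono {s : ℕ} {F G : Finset (ℕ × Sym2 ℕ)} (h : F ⊆ G) : img s F ⊆ img s G :=
  fun e he => mem_img.mpr (h (mem_img.mp he))

lemma img_insert {s : ℕ} {p : ℕ × Sym2 ℕ} {F : Finset (ℕ × Sym2 ℕ)} :
    img s (insert p F) = if p.1 = s then insert p.2 (img s F) else img s F := by
  ext e
  rw [mem_img, Finset.mem_insert]
  split_ifs with h
  · rw [Finset.mem_insert, mem_img, Prod.ext_iff]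
    constructor
    · rintro (⟨-, h2⟩ | h2)
      · exact Or.inl h2
      · exact Or.inr h2
    · rintro (rfl | h2)
      · exact Or.inl ⟨h.symm, rfl⟩
      · exact Or.inr h2
  · rw [mem_img, Prod.ext_iff]
    constructor
    · rintro (⟨h1, -⟩ | h2)
      · exact absurd h1.symm h
      · exact h2
    · exact Or.inr

lemma projStep_true {D : ℕ} (st : (ℕ → ℕ) × (ℕ → Finset (Sym2 ℕ))) (p : ℕ × Sym2 ℕ) :
    projStep D true st p =
      (bump st.1 p.2,
        if keepB D st.1 p.2 then
          (fun s => if s = p.1 then insert p.2 (st.2 s) else st.2 s) else st.2) := rfl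

lemma fold_spec {D : ℕ} : ∀ (L : List (ℕ × Sym2 ℕ)) (c : ℕ → ℕ) (E : ℕ → Finset (Sym2 ℕ)),
    (L.foldl (projStep D true) (c, E)).2 = fun s => E s ∪ img s (keptL D c L).toFinset := by
  intro L
  induction L with
  | nil => intro c E; funext s; simp [img]
  | cons p L ih =>
    intro c E
    rw [List.foldl_cons, projStep_true]
    by_cases hk : keepB D c p.2 = true
    · rw [if_pos hk, ih]
      funext s
      rw [keptL_cons, if_pos hk, List.toFinset_cons, img_insert]
      by_cases hs : s = p.1
      · subst hs
        rw [if_pos rfl, if_pos rfl, Finset.insert_union, Finset.union_insert]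
      · rw [if_neg hs, if_neg (fun h => hs h.symm)]
    · rw [if_neg hk, ih]
      funext s
      rw [keptL_cons, if_neg hk]

lemma project_edges (D T : ℕ) (S : GraphStream) :
    (project true D T S).edges =
      fun s => img s (keptL D (fun _ => 0) (S.procList T)).toFinset := by
  show ((S.procList T).foldl (projStep D true)
      ((fun _ => 0 : ℕ → ℕ), (fun _ => ∅ : ℕ → Finset (Sym2 ℕ)))).2 = _
  rw [fold_spec]
  funext s
  rw [Finset.empty_union]

end BBDS
end BBDSAux3
section BBDSAux4
open List
namespace BBDS

/-- Existence of a chain of length `n` of valid streams linked by edge-neighboring. -/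
def chainP (t n : ℕ) (A B : GraphStream) : Prop :=
  ∃ f : ℕ → GraphStream, f 0 = A ∧ f n = B ∧ (∀ i ≤ n, (f i).Valid t) ∧
    ∀ i < n, edgeNeighborStream t (f i) (f (i + 1))

lemma chainP_dist {t n : ℕ} {A B : GraphStream} (h : chainP t n A B) :
    streamEdgeDist t A B ≤ n :=
  Nat.sInf_le h

lemma ens_symm {t : ℕ} {A B : GraphStream} (h : edgeNeighborStream t A B) :
    edgeNeighborStream t B A := h.symm

lemma chainP_zero {t : ℕ} {A B : GraphStream} (h : A = B) (hA : A.Valid t) :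
    chainP t 0 A B := by
  refine ⟨fun _ => A, rfl, h, ?_, ?_⟩
  · intro i _; exact hA
  · intro i hi; omega

lemma chainP_one {t : ℕ} {A B : GraphStream} (h : edgeNeighborStream t A B)
    (hA : A.Valid t) (hB : B.Valid t) : chainP t 1 A B := by
  refine ⟨fun i => if i = 0 then A else B, rfl, rfl, ?_, ?_⟩
  · intro i _
    by_cases hi : i = 0 <;> simp [hi, hA, hB]
  · intro i hi
    have : i = 0 := by omega
    subst this
    simpa using h

lemma chainP_symm {t n : ℕ} {A B : GraphStream} (h : chainP t n A B) : chainP t n B A := by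
  obtain ⟨f, h0, hn, hv, hr⟩ := h
  refine ⟨fun i => f (n - i), by simpa using hn, by simpa using h0, ?_, ?_⟩
  · intro i _; exact hv _ (by omega)
  · intro i hi
    have h1 : n - i = (n - (i + 1)) + 1 := by omega
    have h2 := ens_symm (hr (n - (i + 1)) (by omega))
    show edgeNeighborStream t (f (n - i)) (f (n - (i + 1)))
    rw [h1]
    exact h2

lemma chainP_trans {t m n : ℕ} {A M B : GraphStream} (h1 : chainP t m A M)
    (h2 : chainP t n M B) : chainP t (m + n) A B := by
  obtain ⟨f1, hf10, hf1m, hv1, hr1⟩ := h1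
  obtain ⟨f2, hf20, hf2n, hv2, hr2⟩ := h2
  refine ⟨fun i => if i ≤ m then f1 i else f2 (i - m), by simp [hf10], ?_, ?_, ?_⟩
  · by_cases h : m + n ≤ m
    · have hn0 : n = 0 := by omega
      simp only [if_pos h]
      have : m + n = m := by omega
      rw [this, hf1m, ← hf2n, hn0, hf20]
    · simp only [if_neg h]
      have : m + n - m = n := by omega
      rw [this, hf2n]
  · intro i hi
    by_cases h : i ≤ m
    · simp only [if_pos h]; exact hv1 _ h
    · simp only [if_neg h]; exact hv2 _ (by omega)
  · intro i hi
    by_cases h : i + 1 ≤ m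
    · simp only [if_pos h, if_pos (by omega : i ≤ m)]
      exact hr1 i (by omega)
    · by_cases h' : i ≤ m
      · have him : i = m := by omega
        subst him
        simp only [if_pos le_rfl, if_neg h]
        have : i + 1 - i = 1 := by omega
        rw [this, hf1m, ← hf20]
        exact hr2 0 (by omega)
      · simp only [if_neg h, if_neg h']
        have : i + 1 - m = (i - m) + 1 := by omega
        rw [this]
        exact hr2 (i - m) (by omega)

lemma gs_ext {S1 S2 : GraphStream} (hn : S1.nodes = S2.nodes) (he : S1.edges = S2.edges) :
    S1 = S2 := by
  cases S1; cases S2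
  simp only at hn he
  rw [hn, he]

lemma removeEdge_valid {t : ℕ} {S : GraphStream} (h : S.Valid t) (e : Sym2 ℕ) :
    (S.removeEdge e).Valid t := by
  obtain ⟨h1, h2, h3, h4⟩ := h
  refine ⟨?_, h2, ?_, ?_⟩
  · intro s hs
    refine h1 s ?_
    rcases hs with hs | hs
    · exact Or.inl hs
    · exact Or.inr (hs.mono (Finset.erase_subset _ _))
  · intro s s' hss'
    exact (h3 s s' hss').mono (Finset.erase_subset _ _) (Finset.erase_subset _ _)
  · intro s e' he'
    exact h4 s e' (Finset.mem_of_mem_erase he')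

lemma removeNode_valid {t : ℕ} {S : GraphStream} (h : S.Valid t) (v : ℕ) :
    (S.removeNode v).Valid t := by
  obtain ⟨h1, h2, h3, h4⟩ := h
  refine ⟨?_, ?_, ?_, ?_⟩
  · intro s hs
    refine h1 s ?_
    rcases hs with hs | hs
    · exact Or.inl (hs.mono (Finset.erase_subset _ _))
    · exact Or.inr (hs.mono (Finset.filter_subset _ _))
  · intro s s' hss'
    exact (h2 s s' hss').mono (Finset.erase_subset _ _) (Finset.erase_subset _ _)
  · intro s s' hss'
    exact (h3 s s' hss').mono (Finset.filter_subset _ _) (Finset.filter_subset _ _)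
  · intro s e' he'
    rw [GraphStream.removeNode, Finset.mem_filter] at he'
    obtain ⟨he', hv⟩ := he'
    refine ⟨(h4 s e' he').1, ?_⟩
    intro w hw
    obtain ⟨s', hs', hws'⟩ := (h4 s e' he').2 w hw
    refine ⟨s', hs', Finset.mem_erase.mpr ⟨?_, hws'⟩⟩
    intro hwv; rw [hwv] at hw; exact hv hw

lemma subValid {t : ℕ} {A B : GraphStream} (hB : B.Valid t) (hn : A.nodes = B.nodes)
    (he : ∀ s, A.edges s ⊆ B.edges s) : A.Valid t := by
  obtain ⟨h1, h2, h3, h4⟩ := hB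
  refine ⟨?_, ?_, ?_, ?_⟩
  · intro s hs
    refine h1 s ?_
    rcases hs with hs | hs
    · exact Or.inl (by rw [← hn]; exact hs)
    · exact Or.inr (hs.mono (he s))
  · intro s s' hss'
    rw [hn]; exact h2 s s' hss'
  · intro s s' hss'
    exact (h3 s s' hss').mono (he s) (he s')
  · intro s e' he'
    obtain ⟨hd, hw⟩ := h4 s e' (he s he')
    refine ⟨hd, ?_⟩
    intro w hws
    obtain ⟨s', hs', hws'⟩ := hw w hws
    exact ⟨s', hs', by rw [hn]; exact hws'⟩

end BBDS
end BBDSAux4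
section BBDSAux5
open List
namespace BBDS

lemma chain_of_decomp {t : ℕ} : ∀ (n : ℕ) (P : Finset (ℕ × Sym2 ℕ)) (A B : GraphStream),
    P.card = n → A.Valid t → B.Valid t → A.nodes = B.nodes →
    (∀ s, A.edges s = B.edges s ∪ img s P) →
    (∀ p ∈ P, p.2 ∉ B.edges p.1) →
    chainP t n A B := by
  intro n
  induction n with
  | zero =>
    intro P A B hcard hA hB hn hE _
    have hP : P = ∅ := Finset.card_eq_zero.mp hcard
    subst hP
    refine chainP_zero (gs_ext hn ?_) hA
    funext s
    rw [hE s]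
    simp [img]
  | succ n ih =>
    intro P A B hcard hA hB hn hE hQ
    obtain ⟨p, hp⟩ := Finset.card_pos.mp (show 0 < P.card by omega)
    have hpP : (p.1, p.2) ∈ P := hp
    have hpA : p.2 ∈ A.edges p.1 := by
      rw [hE p.1]
      exact Finset.mem_union_right _ (mem_img.mpr hpP)
    set A' := A.removeEdge p.2 with hA'def
    have hA'valid : A'.Valid t := removeEdge_valid hA p.2
    have hA'nodes : A'.nodes = B.nodes := hn
    have hA'E : ∀ s, A'.edges s = B.edges s ∪ img s (P.erase p) := by
      intro s
      show (A.edges s).erase p.2 = _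
      by_cases hs : s = p.1
      · subst hs
        rw [hE]
        ext e
        simp only [Finset.mem_erase, Finset.mem_union, mem_img, Finset.mem_erase]
        constructor
        · rintro ⟨hne, h | h⟩
          · exact Or.inl h
          · exact Or.inr ⟨fun heq => hne (congrArg Prod.snd heq), h⟩
        · rintro (h | ⟨hne, h⟩)
          · refine ⟨?_, Or.inl h⟩
            rintro rfl
            exact hQ p hp h
          · refine ⟨?_, Or.inr h⟩
            rintro rfl
            exact hne rfl
      · have hnm : p.2 ∉ A.edges s := by
          intro hmem
          have hd := hA.2.2.1 s p.1 hs
          exact (Finset.disjoint_left.mp hd hmem) hpA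
        rw [Finset.erase_eq_of_notMem hnm, hE]
        congr 1
        ext e
        simp only [mem_img, Finset.mem_erase]
        constructor
        · intro h
          exact ⟨fun heq => hs (congrArg Prod.fst heq), h⟩
        · intro h; exact h.2
    have hQ' : ∀ r ∈ P.erase p, r.2 ∉ B.edges r.1 := fun r hr =>
      hQ r (Finset.mem_of_mem_erase hr)
    have hcard' : (P.erase p).card = n := by
      rw [Finset.card_erase_of_mem hp, hcard]
      omega
    obtain ⟨f', hf0, hfn, hfv, hfr⟩ := ih (P.erase p) A' B hcard' hA'valid hB hA'nodes hA'E hQ'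
    refine ⟨fun i => if i = 0 then A else f' (i - 1), rfl, by simp [hfn], ?_, ?_⟩
    · intro i hi
      by_cases h : i = 0
      · simp [h, hA]
      · simp only [if_neg h]
        exact hfv _ (by omega)
    · intro i hi
      by_cases h : i = 0
      · subst h
        simp only [if_pos rfl, if_neg (by omega : ¬ (0 + 1 = 0))]
        have : f' (0 + 1 - 1) = A' := hf0
        rw [this]
        exact Or.inl (Or.inl ⟨p.1, p.2, hpA, rfl⟩)
      · simp only [if_neg h, if_neg (by omega : ¬ (i + 1 = 0))]
        have h1 : i + 1 - 1 = (i - 1) + 1 := by omega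
        rw [h1]
        exact hfr (i - 1) (by omega)

lemma flatMap_congr' {α : Type*} {l : List ℕ} {g g' : ℕ → List α}
    (h : ∀ x ∈ l, g' x = g x) : l.flatMap g' = l.flatMap g := by
  induction l with
  | nil => rfl
  | cons a l ih =>
    simp only [List.flatMap_cons]
    rw [h a List.mem_cons_self, ih (fun x hx => h x (List.mem_cons_of_mem _ hx))]

lemma flatMap_split {α : Type*} : ∀ (l : List ℕ) (g g' : ℕ → List α), l.Nodup →
    ∀ t0 ∈ l, (∀ s ∈ l, s ≠ t0 → g' s = g s) →
    ∀ (a : α) (F1 F2 : List α), g t0 = F1 ++ a :: F2 → g' t0 = F1 ++ F2 →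
    ∃ L1 L2, l.flatMap g = L1 ++ a :: L2 ∧ l.flatMap g' = L1 ++ L2 := by
  intro l
  induction l with
  | nil => intro g g' _ t0 ht0; simp at ht0
  | cons s l ih =>
    intro g g' hnd t0 ht0 hcong a F1 F2 h1 h2
    rw [List.nodup_cons] at hnd
    by_cases hs : s = t0
    · subst hs
      refine ⟨F1, F2 ++ l.flatMap g, ?_, ?_⟩
      · rw [List.flatMap_cons, h1, List.append_assoc, List.cons_append]
      · rw [List.flatMap_cons, h2,
          flatMap_congr' (fun x hx => hcong x (List.mem_cons_of_mem _ hx)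
            (fun hxs => hnd.1 (hxs ▸ hx))),
          List.append_assoc]
    · have ht0' : t0 ∈ l := by
        rcases List.mem_cons.mp ht0 with h | h
        · exact absurd h.symm hs
        · exact h
      obtain ⟨L1, L2, hL1, hL2⟩ := ih g g' hnd.2 t0 ht0'
        (fun x hx => hcong x (List.mem_cons_of_mem _ hx)) a F1 F2 h1 h2
      refine ⟨g s ++ L1, L2, ?_, ?_⟩
      · rw [List.flatMap_cons, hL1, List.append_assoc]
      · rw [List.flatMap_cons, hL2, hcong s List.mem_cons_self hs, List.append_assoc]

lemma procList_split {S S' : GraphStream} {T t0 : ℕ} (ht0 : t0 < T + 1) {e0 : Sym2 ℕ}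
    (he0 : e0 ∈ S.edges t0)
    (hS' : ∀ s, S'.edges s = if s = t0 then (S.edges s).erase e0 else S.edges s) :
    ∃ L1 L2, S.procList T = L1 ++ (t0, e0) :: L2 ∧ S'.procList T = L1 ++ L2 := by
  obtain ⟨E1, E2, hE1, hE2⟩ := sortEdges_erase he0
  simp only [GraphStream.procList]
  refine flatMap_split (List.range (T + 1)) _ _
    List.nodup_range t0 (List.mem_range.mpr ht0) ?_ (t0, e0)
    (E1.map fun e => (t0, e)) (E2.map fun e => (t0, e)) ?_ ?_
  · intro s _ hst0
    rw [hS' s, if_neg hst0]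
  · rw [hE1]; simp
  · rw [hS' t0, if_pos rfl, hE2]; simp

lemma trunc_proj_edges_sub {D T t s : ℕ} {S : GraphStream} {e : Sym2 ℕ}
    (h : e ∈ ((project true D T S).trunc t).edges s) : s ≤ t ∧ e ∈ S.edges s := by
  have hdef : ((project true D T S).trunc t).edges s =
      if s ≤ t then (project true D T S).edges s else ∅ := rfl
  rw [hdef] at h
  by_cases hst : s ≤ t
  · rw [if_pos hst, project_edges] at h
    refine ⟨hst, ?_⟩
    have := mem_img.mp h
    rw [List.mem_toFinset] at this
    exact mem_procList ((keptL_sublist _ _).subset this)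
  · rw [if_neg hst] at h
    simp at h

lemma truncProj_valid {D T t : ℕ} {S : GraphStream} (hS : S.Valid T) (ht : t ≤ T) :
    ((project true D T S).trunc t).Valid t := by
  set A := (project true D T S).trunc t with hA
  have hnodes : ∀ s, A.nodes s = if s ≤ t then S.nodes s else ∅ := fun s => rfl
  refine ⟨?_, ?_, ?_, ?_⟩
  · intro s hs
    rcases hs with hs | hs
    · rw [hnodes] at hs
      by_cases hst : s ≤ t
      · rw [if_pos hst] at hs
        exact ⟨(hS.1 s (Or.inl hs)).1, hst⟩
      · rw [if_neg hst] at hs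
        simp at hs
    · obtain ⟨e, he⟩ := hs
      obtain ⟨hst, he'⟩ := trunc_proj_edges_sub he
      exact ⟨(hS.1 s (Or.inr ⟨e, he'⟩)).1, hst⟩
  · intro s s' hss'
    rw [Finset.disjoint_left]
    intro v hv hv'
    rw [hnodes] at hv hv'
    by_cases h1 : s ≤ t
    · by_cases h2 : s' ≤ t
      · rw [if_pos h1] at hv; rw [if_pos h2] at hv'
        exact Finset.disjoint_left.mp (hS.2.1 s s' hss') hv hv'
      · rw [if_neg h2] at hv'; simp at hv'
    · rw [if_neg h1] at hv; simp at hv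
  · intro s s' hss'
    rw [Finset.disjoint_left]
    intro e he he'
    obtain ⟨-, he2⟩ := trunc_proj_edges_sub he
    obtain ⟨-, he2'⟩ := trunc_proj_edges_sub he'
    exact Finset.disjoint_left.mp (hS.2.2.1 s s' hss') he2 he2'
  · intro s e he
    obtain ⟨hst, he'⟩ := trunc_proj_edges_sub he
    obtain ⟨hd, hw⟩ := hS.2.2.2 s e he'
    refine ⟨hd, ?_⟩
    intro w hws
    obtain ⟨s', hs', hws'⟩ := hw w hws
    refine ⟨s', hs', ?_⟩
    rw [hnodes, if_pos (le_trans hs' hst)]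
    exact hws'

end BBDS
end BBDSAux5
section BBDSAux6
open List
namespace BBDS

lemma del1_fin {K K' : List (ℕ × Sym2 ℕ)} (h : Del1 K K') :
    K'.toFinset ⊆ K.toFinset ∧
      ∃ Q : Finset (ℕ × Sym2 ℕ), Q.card ≤ 1 ∧ K.toFinset ⊆ K'.toFinset ∪ Q := by
  rcases h with rfl | ⟨A, p, B, rfl, rfl⟩
  · exact ⟨Finset.Subset.refl _, ∅, by simp, by simp⟩
  · constructor
    · intro x hx
      simp only [List.mem_toFinset, List.mem_append, List.mem_cons] at hx ⊢
      tauto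
    · refine ⟨{p}, by simp, ?_⟩
      intro x hx
      simp only [List.mem_toFinset, List.mem_append, List.mem_cons, Finset.mem_union,
        Finset.mem_singleton] at hx ⊢
      tauto

lemma kept_decomp {D T t0 : ℕ} {S S' : GraphStream} (ht0 : t0 < T + 1) {e0 : Sym2 ℕ}
    (he0 : e0 ∈ S.edges t0)
    (hS'e : ∀ s, S'.edges s = if s = t0 then (S.edges s).erase e0 else S.edges s) :
    ∃ FM FKS FKS' : Finset (ℕ × Sym2 ℕ),
      (project true D T S).edges = (fun s => img s FKS) ∧
      (project true D T S').edges = (fun s => img s FKS') ∧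
      FM ⊆ FKS ∧ FM ⊆ FKS' ∧
      FKS \ FM ⊆ {(t0, e0)} ∧
      (FKS' \ FM).card ≤ 2 ∧
      (∀ p ∈ FM, p.2 ∈ S'.edges p.1) := by
  obtain ⟨L1, L2, hLS, hLS'⟩ := procList_split ht0 he0 hS'e
  set c0 : ℕ → ℕ := fun _ => 0 with hc0
  set c1 := cAfter c0 L1 with hc1
  set K1 := keptL D c0 L1 with hK1
  set D2 := keptL D c1 L2 with hD2f
  set D2' := keptL D (bump c1 e0) L2 with hD2'f
  obtain ⟨mid, hdel1, hdel2⟩ := keptL_bump_del (D := D) L2 c1 e0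
  obtain ⟨hmid_sub, Q1, hQ1card, hQ1⟩ := del1_fin hdel1
  obtain ⟨hD2'_sub, Q2, hQ2card, hQ2⟩ := del1_fin hdel2
  have hKS : keptL D c0 (S.procList T) =
      K1 ++ (if keepB D c1 e0 then (t0, e0) :: D2' else D2') := by
    rw [hLS, keptL_append, keptL_cons]
  have hKS' : keptL D c0 (S'.procList T) = K1 ++ D2 := by
    rw [hLS', keptL_append]
  refine ⟨K1.toFinset ∪ D2'.toFinset,
    (keptL D c0 (S.procList T)).toFinset,
    (keptL D c0 (S'.procList T)).toFinset,
    project_edges D T S, project_edges D T S', ?_, ?_, ?_, ?_, ?_⟩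
  · intro x hx
    rw [hKS, List.toFinset_append]
    rcases Finset.mem_union.mp hx with h | h
    · exact Finset.mem_union_left _ h
    · refine Finset.mem_union_right _ ?_
      split
      · rw [List.toFinset_cons]; exact Finset.mem_insert_of_mem h
      · exact h
  · intro x hx
    rw [hKS', List.toFinset_append]
    rcases Finset.mem_union.mp hx with h | h
    · exact Finset.mem_union_left _ h
    · exact Finset.mem_union_right _ (hmid_sub (hD2'_sub h))
  · intro x hx
    rw [Finset.mem_sdiff] at hx
    obtain ⟨hx1, hx2⟩ := hx
    rw [hKS, List.toFinset_append] at hx1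
    rcases Finset.mem_union.mp hx1 with h | h
    · exact absurd (Finset.mem_union_left _ h) hx2
    · by_cases hkeep : keepB D c1 e0 = true
      · rw [if_pos hkeep, List.toFinset_cons] at h
        rcases Finset.mem_insert.mp h with h | h
        · rw [h]; exact Finset.mem_singleton_self _
        · exact absurd (Finset.mem_union_right _ h) hx2
      · rw [if_neg hkeep] at h
        exact absurd (Finset.mem_union_right _ h) hx2
  · have hsub : (keptL D c0 (S'.procList T)).toFinset \ (K1.toFinset ∪ D2'.toFinset) ⊆
        Q1 ∪ Q2 := by
      intro x hx
      rw [Finset.mem_sdiff] at hx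
      obtain ⟨hx1, hx2⟩ := hx
      rw [hKS', List.toFinset_append] at hx1
      rcases Finset.mem_union.mp hx1 with h | h
      · exact absurd (Finset.mem_union_left _ h) hx2
      · rcases Finset.mem_union.mp (hQ1 h) with h' | h'
        · rcases Finset.mem_union.mp (hQ2 h') with h'' | h''
          · exact absurd (Finset.mem_union_right _ h'') hx2
          · exact Finset.mem_union_right _ h''
        · exact Finset.mem_union_left _ h'
    calc ((keptL D c0 (S'.procList T)).toFinset \ (K1.toFinset ∪ D2'.toFinset)).card
        ≤ (Q1 ∪ Q2).card := Finset.card_le_card hsub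
      _ ≤ Q1.card + Q2.card := Finset.card_union_le _ _
      _ ≤ 2 := by omega
  · intro p hp
    have hmem : p ∈ L1 ++ L2 := by
      rcases Finset.mem_union.mp hp with h | h
      · exact List.mem_append_left _ ((keptL_sublist _ _).subset (List.mem_toFinset.mp h))
      · exact List.mem_append_right _ ((keptL_sublist _ _).subset (List.mem_toFinset.mp h))
    rw [← hLS'] at hmem
    exact mem_procList hmem

end BBDS
end BBDSAux6
section BBDSAux7
open List
namespace BBDS

lemma chain_from_imgs {t : ℕ} {X M : GraphStream} {FM FK : Finset (ℕ × Sym2 ℕ)}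
    (hXv : X.Valid t) (hMv : M.Valid t)
    (hnodes : X.nodes = M.nodes)
    (hXe : ∀ s, X.edges s = if s ≤ t then img s FK else ∅)
    (hMe : ∀ s, M.edges s = if s ≤ t then img s FM else ∅)
    (hsub : FM ⊆ FK) :
    chainP t ((FK \ FM).filter (fun p => p.1 ≤ t)).card X M := by
  apply chain_of_decomp _ _ _ _ rfl hXv hMv hnodes ?_ ?_
  · intro s
    rw [hXe, hMe]
    by_cases hst : s ≤ t
    · rw [if_pos hst, if_pos hst]
      ext e
      simp only [Finset.mem_union, mem_img, Finset.mem_filter, Finset.mem_sdiff]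
      constructor
      · intro h
        by_cases hm : (s, e) ∈ FM
        · exact Or.inl hm
        · exact Or.inr ⟨⟨h, hm⟩, hst⟩
      · rintro (h | ⟨⟨h, -⟩, -⟩)
        · exact hsub h
        · exact h
    · rw [if_neg hst, if_neg hst, Finset.empty_union]
      ext e
      simp only [Finset.notMem_empty, false_iff]
      intro h
      obtain ⟨-, h2⟩ := Finset.mem_filter.mp (mem_img.mp h)
      exact hst h2
  · intro p hp
    rw [Finset.mem_filter, Finset.mem_sdiff] at hp
    obtain ⟨⟨-, hpm⟩, hpt⟩ := hp
    rw [hMe, if_pos hpt]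
    intro hmem
    exact hpm (mem_img.mp hmem)

lemma main_dir (T D t : ℕ) (S S' : GraphStream) (hS : S.Valid T) (hS' : S'.Valid T)
    (hrm : edgeRemovalStream T S S') (htT : t ≤ T) :
    ∃ n ≤ 3, chainP t n ((projBBDS D T S).trunc t) ((projBBDS D T S').trunc t) := by
  have hAv : ((projBBDS D T S).trunc t).Valid t := truncProj_valid hS htT
  have hBv : ((projBBDS D T S').trunc t).Valid t := truncProj_valid hS' htT
  rcases hrm with ⟨t0, e0, he0, rfl⟩ | ⟨v0, hv0, hdeg, rfl⟩
  · -- Case 1: removal of a single edge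
    have ht0 : 1 ≤ t0 ∧ t0 ≤ T := hS.1 t0 (Or.inr ⟨e0, he0⟩)
    have hS'e : ∀ s, (S.removeEdge e0).edges s =
        if s = t0 then (S.edges s).erase e0 else S.edges s := by
      intro s
      show (S.edges s).erase e0 = _
      by_cases hs : s = t0
      · rw [if_pos hs, hs]
      · rw [if_neg hs]
        apply Finset.erase_eq_of_notMem
        intro hmem
        exact (Finset.disjoint_left.mp (hS.2.2.1 s t0 hs) hmem) he0
    obtain ⟨FM, FKS, FKS', hPE, hPE', hsub1, hsub2, hq, hr, hmem⟩ :=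
      kept_decomp (D := D) (show t0 < T + 1 by omega) he0 hS'e
    have hAe : ∀ s, ((projBBDS D T S).trunc t).edges s = if s ≤ t then img s FKS else ∅ := by
      intro s
      show (if s ≤ t then (project true D T S).edges s else ∅) = _
      rw [hPE]
    have hBe : ∀ s, ((projBBDS D T (S.removeEdge e0)).trunc t).edges s =
        if s ≤ t then img s FKS' else ∅ := by
      intro s
      show (if s ≤ t then (project true D T (S.removeEdge e0)).edges s else ∅) = _
      rw [hPE']
    have hABnodes : ((projBBDS D T S).trunc t).nodes =
        ((projBBDS D T (S.removeEdge e0)).trunc t).nodes := rfl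
    set M : GraphStream := ⟨((projBBDS D T S).trunc t).nodes,
      fun s => if s ≤ t then img s FM else ∅⟩ with hMdef
    have hMv : M.Valid t := by
      refine subValid hBv hABnodes ?_
      intro s
      rw [hBe]
      show (if s ≤ t then img s FM else ∅) ⊆ _
      split_ifs with h
      · exact img_mono hsub2
      · exact Finset.Subset.refl _
    have hchain1 := chain_from_imgs hAv hMv rfl hAe (fun s => rfl) hsub1
    have hchain2 := chain_from_imgs hBv hMv hABnodes.symm hBe (fun s => rfl) hsub2
    have hn1 : ((FKS \ FM).filter (fun p => p.1 ≤ t)).card ≤ 1 := by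
      calc ((FKS \ FM).filter (fun p => p.1 ≤ t)).card ≤ (FKS \ FM).card :=
            Finset.card_le_card (Finset.filter_subset _ _)
        _ ≤ ({(t0, e0)} : Finset (ℕ × Sym2 ℕ)).card := Finset.card_le_card hq
        _ = 1 := Finset.card_singleton _
    have hn2 : ((FKS' \ FM).filter (fun p => p.1 ≤ t)).card ≤ 2 :=
      le_trans (Finset.card_le_card (Finset.filter_subset _ _)) hr
    exact ⟨_, by omega, chainP_trans hchain1 (chainP_symm hchain2)⟩
  · -- Case 2: removal of a node of degree ≤ 1
    obtain ⟨s0, hs0⟩ := hv0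
    have hs0T : 1 ≤ s0 ∧ s0 ≤ T := hS.1 s0 (Or.inl ⟨v0, hs0⟩)
    have huniq : ∀ s, s ≠ s0 → v0 ∉ S.nodes s := fun s hne hmem =>
      (Finset.disjoint_left.mp (hS.2.1 s s0 hne) hmem) hs0
    set Ed := (S.flat T).edges.filter (fun e => v0 ∈ e) with hEddef
    have hdeg' : Ed.card ≤ 1 := hdeg
    have hEdmem : ∀ s e, e ∈ S.edges s → v0 ∈ e → e ∈ Ed := by
      intro s e he hv
      have hsT : s ≤ T := (hS.1 s (Or.inr ⟨e, he⟩)).2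
      rw [hEddef, Finset.mem_filter]
      exact ⟨Finset.mem_biUnion.mpr ⟨s, Finset.mem_range.mpr (by omega), he⟩, hv⟩
    have hsubEd : ((((projBBDS D T S).trunc t).flat t).edges.filter (fun e => v0 ∈ e)) ⊆ Ed := by
      intro e he
      rw [Finset.mem_filter] at he
      obtain ⟨hbi, hv⟩ := he
      obtain ⟨s, hsr, hes⟩ := Finset.mem_biUnion.mp hbi
      exact hEdmem s e (trunc_proj_edges_sub hes).2 hv
    have hdegA : FinGraph.degree (((projBBDS D T S).trunc t).flat t) v0 ≤ 1 :=
      le_trans (Finset.card_le_card hsubEd) hdeg'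
    have hhasA : s0 ≤ t → ((projBBDS D T S).trunc t).hasNode v0 := by
      intro hst
      refine ⟨s0, ?_⟩
      show v0 ∈ (if s0 ≤ t then S.nodes s0 else ∅)
      rw [if_pos hst]
      exact hs0
    by_cases hcase : Ed = ∅
    · -- v0 has degree 0
      have hnov : ∀ s e, e ∈ S.edges s → v0 ∉ e := by
        intro s e he hv
        have := hEdmem s e he hv
        rw [hcase] at this
        simp at this
      have hS'E : ∀ s, (S.removeNode v0).edges s = S.edges s := by
        intro s
        exact Finset.filter_eq_self.mpr (fun e he => hnov s e he)
      have hproc : (S.removeNode v0).procList T = S.procList T := by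
        simp only [GraphStream.procList, hS'E]
      have h1 : (project true D T (S.removeNode v0)).edges = (project true D T S).edges := by
        rw [project_edges, project_edges, hproc]
      have hedgeseq : ((projBBDS D T (S.removeNode v0)).trunc t).edges =
          ((projBBDS D T S).trunc t).edges := by
        funext s
        show (if s ≤ t then (project true D T (S.removeNode v0)).edges s else ∅) =
          (if s ≤ t then (project true D T S).edges s else ∅)
        rw [h1]
      by_cases hst : s0 ≤ t
      · have hBA : (projBBDS D T (S.removeNode v0)).trunc t =
            ((projBBDS D T S).trunc t).removeNode v0 := by
          apply gs_ext
          · funext s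
            show (if s ≤ t then (S.nodes s).erase v0 else ∅) =
              (if s ≤ t then S.nodes s else ∅).erase v0
            split_ifs with h
            · rfl
            · rw [Finset.erase_empty]
          · funext s
            show ((projBBDS D T (S.removeNode v0)).trunc t).edges s =
              (((projBBDS D T S).trunc t).edges s).filter (fun e => v0 ∉ e)
            rw [hedgeseq]
            symm
            apply Finset.filter_eq_self.mpr
            intro e he
            exact hnov s e (trunc_proj_edges_sub he).2
        refine ⟨1, by omega, chainP_one ?_ hAv hBv⟩
        exact Or.inl (Or.inr ⟨v0, hhasA hst, hdegA, hBA⟩)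
      · refine ⟨0, by omega, chainP_zero ?_ hAv⟩
        apply gs_ext
        · funext s
          show (if s ≤ t then S.nodes s else ∅) = (if s ≤ t then (S.nodes s).erase v0 else ∅)
          split_ifs with h
          · rw [Finset.erase_eq_of_notMem (huniq s (by omega))]
          · rfl
        · exact hedgeseq.symm
    · -- v0 has degree exactly 1
      have hcard1 : Ed.card = 1 := by
        have : 0 < Ed.card := Finset.card_pos.mpr (Finset.nonempty_iff_ne_empty.mpr hcase)
        omega
      obtain ⟨e0, hEd0⟩ := Finset.card_eq_one.mp hcard1
      have he0Ed : e0 ∈ Ed := by rw [hEd0]; exact Finset.mem_singleton_self _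
      have he0flat : e0 ∈ (S.flat T).edges ∧ v0 ∈ e0 := Finset.mem_filter.mp he0Ed
      obtain ⟨t0, ht0r, he0⟩ := Finset.mem_biUnion.mp he0flat.1
      have hv0e0 : v0 ∈ e0 := he0flat.2
      have ht0T : t0 < T + 1 := Finset.mem_range.mp ht0r
      have honly : ∀ s e, e ∈ S.edges s → v0 ∈ e → e = e0 := fun s e he hv =>
        Finset.mem_singleton.mp (hEd0 ▸ hEdmem s e he hv)
      have hS'e : ∀ s, (S.removeNode v0).edges s =
          if s = t0 then (S.edges s).erase e0 else S.edges s := by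
        intro s
        show (S.edges s).filter (fun e => v0 ∉ e) = _
        by_cases hs : s = t0
        · subst hs
          rw [if_pos rfl]
          ext e
          rw [Finset.mem_filter, Finset.mem_erase]
          constructor
          · rintro ⟨he, hv⟩
            exact ⟨fun heq => hv (heq ▸ hv0e0), he⟩
          · rintro ⟨hne, he⟩
            exact ⟨he, fun hv => hne (honly _ _ he hv)⟩
        · rw [if_neg hs]
          apply Finset.filter_eq_self.mpr
          intro e he hv
          have heq : e = e0 := honly s e he hv
          subst heq
          exact (Finset.disjoint_left.mp (hS.2.2.1 s t0 hs) he) he0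
      obtain ⟨FM, FKS, FKS', hPE, hPE', hsub1, hsub2, hq, hr, hmem⟩ :=
        kept_decomp (D := D) ht0T he0 hS'e
      have hAe : ∀ s, ((projBBDS D T S).trunc t).edges s = if s ≤ t then img s FKS else ∅ := by
        intro s
        show (if s ≤ t then (project true D T S).edges s else ∅) = _
        rw [hPE]
      have hBe : ∀ s, ((projBBDS D T (S.removeNode v0)).trunc t).edges s =
          if s ≤ t then img s FKS' else ∅ := by
        intro s
        show (if s ≤ t then (project true D T (S.removeNode v0)).edges s else ∅) = _
        rw [hPE']
      have hFMv0 : ∀ p ∈ FM, v0 ∉ p.2 := by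
        intro p hp hv
        have h2 := hmem p hp
        rw [show (S.removeNode v0).edges p.1 = (S.edges p.1).filter (fun e => v0 ∉ e) from rfl,
          Finset.mem_filter] at h2
        exact h2.2 hv
      have hn2 : ((FKS' \ FM).filter (fun p => p.1 ≤ t)).card ≤ 2 :=
        le_trans (Finset.card_le_card (Finset.filter_subset _ _)) hr
      by_cases hst : s0 ≤ t
      · -- node arrives within the window: one node-removal step plus ≤ 2 edge steps
        set M : GraphStream := ⟨fun s => if s ≤ t then (S.nodes s).erase v0 else ∅,
          fun s => if s ≤ t then img s FM else ∅⟩ with hMdef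
        have hA1M : ((projBBDS D T S).trunc t).removeNode v0 = M := by
          apply gs_ext
          · funext s
            show (if s ≤ t then S.nodes s else ∅).erase v0 =
              (if s ≤ t then (S.nodes s).erase v0 else ∅)
            split_ifs with h
            · rfl
            · rw [Finset.erase_empty]
          · funext s
            show (((projBBDS D T S).trunc t).edges s).filter (fun e => v0 ∉ e) =
              (if s ≤ t then img s FM else ∅)
            rw [hAe s]
            split_ifs with h
            · ext e
              simp only [Finset.mem_filter, mem_img]
              constructor
              · rintro ⟨hks, hv⟩
                by_cases hm : (s, e) ∈ FM
                · exact hm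
                · exfalso
                  have hsd : (s, e) ∈ FKS \ FM := Finset.mem_sdiff.mpr ⟨hks, hm⟩
                  have heq := Finset.mem_singleton.mp (hq hsd)
                  have he2 : e = e0 := congrArg Prod.snd heq
                  exact hv (by rw [he2]; exact hv0e0)
              · intro hm
                exact ⟨hsub1 hm, fun hv => hFMv0 (s, e) hm hv⟩
            · rw [Finset.filter_empty]
        have hMv : M.Valid t := hA1M ▸ removeNode_valid hAv v0
        have hstep : chainP t 1 ((projBBDS D T S).trunc t) M := by
          rw [← hA1M]
          exact chainP_one (Or.inl (Or.inr ⟨v0, hhasA hst, hdegA, rfl⟩)) hAv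
            (removeNode_valid hAv v0)
        have hMnodes : ((projBBDS D T (S.removeNode v0)).trunc t).nodes = M.nodes := rfl
        have hchain2 := chain_from_imgs hBv hMv hMnodes hBe (fun s => rfl) hsub2
        exact ⟨_, by omega, chainP_trans hstep (chainP_symm hchain2)⟩
      · -- node arrives after the window: the projections differ only by ≤ 2 edges
        have ht0t : t < t0 := by
          obtain ⟨s', hs't0, hv0s'⟩ := (hS.2.2.2 t0 e0 he0).2 v0 hv0e0
          have hs'eq : s' = s0 := by
            by_contra hne
            exact huniq s' hne hv0s'
          omega
        have hnodesAB : ((projBBDS D T S).trunc t).nodes =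
            ((projBBDS D T (S.removeNode v0)).trunc t).nodes := by
          funext s
          show (if s ≤ t then S.nodes s else ∅) = (if s ≤ t then (S.nodes s).erase v0 else ∅)
          split_ifs with h
          · rw [Finset.erase_eq_of_notMem (huniq s (by omega))]
          · rfl
        have hAe' : ∀ s, ((projBBDS D T S).trunc t).edges s =
            if s ≤ t then img s FM else ∅ := by
          intro s
          rw [hAe s]
          split_ifs with h
          · ext e
            rw [mem_img, mem_img]
            constructor
            · intro hks
              by_cases hm : (s, e) ∈ FM
              · exact hm
              · exfalso
                have hsd : (s, e) ∈ FKS \ FM := Finset.mem_sdiff.mpr ⟨hks, hm⟩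
                have heq := Finset.mem_singleton.mp (hq hsd)
                have hseq : s = t0 := congrArg Prod.fst heq
                omega
            · intro hm
              exact hsub1 hm
          · rfl
        have hchain2 := chain_from_imgs hBv hAv hnodesAB.symm hBe hAe' hsub2
        exact ⟨_, le_trans hn2 (by omega), chainP_symm hchain2⟩

end BBDS
end BBDSAux7
/-- edge-to-edge stability of the BBDS projection.
For every pair of edge-neighboring insertion-only graph streams `S, S'` of length `T`
and every time step `t ∈ [T]`, the edge distance between the BBDS-projected streams
through time `t` is at most `3`. -/
theorem bbds_edge_to_edge_stability (T D : ℕ) (S S' : GraphStream)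
    (hS : S.Valid T) (hS' : S'.Valid T) (hnb : edgeNeighborStream T S S')
    (t : ℕ) (ht1 : 1 ≤ t) (htT : t ≤ T) :
    streamEdgeDist t ((projBBDS D T S).trunc t) ((projBBDS D T S').trunc t) ≤ 3 := by
  rcases hnb with h | h
  · obtain ⟨n, hn3, hc⟩ := BBDS.main_dir T D t S S' hS hS' h htT
    exact le_trans (BBDS.chainP_dist hc) hn3
  · obtain ⟨n, hn3, hc⟩ := BBDS.main_dir T D t S' S hS' hS h htT
    exact le_trans (BBDS.chainP_dist (BBDS.chainP_symm hc)) hn3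
end

section
/- Let T, D ∈ ℕ and ℓ ∈ ℕ ∪ {0}. For every pair of node-neighboring insertion-only graph streams S, S' of length T and every time step t ∈ [T] such that both S and S' are (D,ℓ)-bounded through time t, the node distance between the BBDS-projected streams satisfies d_node(Π^BBDS_D(S)_[t], Π^BBDS_D(S')_[t]) ≤ 2ℓ + 1. -/
open Finset

section BBDSAux

open Finset

lemma edgeKey_mk (a b : ℕ) : edgeKey s(a,b) = Nat.pair (min a b) (max a b) := rfl

lemma endpointsOf_mk (a b : ℕ) : endpointsOf s(a,b) = (min a b, max a b) := by
  simp [endpointsOf, edgeKey_mk, Nat.unpair_pair]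

lemma mk_endpointsOf (e : Sym2 ℕ) : s((endpointsOf e).1, (endpointsOf e).2) = e := by
  induction e using Sym2.ind with
  | _ a b =>
    rw [endpointsOf_mk]
    rcases le_total a b with h | h
    · simp [min_eq_left h, max_eq_right h]
    · simp [min_eq_right h, max_eq_left h, Sym2.eq_swap]

lemma mem_endpoints (e : Sym2 ℕ) (x : ℕ) :
    (x = (endpointsOf e).1 ∨ x = (endpointsOf e).2) ↔ x ∈ e := by
  conv_rhs => rw [← mk_endpointsOf e]
  obtain ⟨a, b⟩ := endpointsOf e
  simp [Sym2.mem_iff]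

lemma gkey_edgeKey (e : Sym2 ℕ) : s((edgeKey e).unpair.1, (edgeKey e).unpair.2) = e :=
  mk_endpointsOf e

lemma mem_sortEdges {E : Finset (Sym2 ℕ)} {e : Sym2 ℕ} : e ∈ sortEdges E ↔ e ∈ E := by
  simp only [sortEdges, List.mem_map, Finset.mem_sort, Finset.mem_image]
  constructor
  · rintro ⟨k, ⟨e', he', rfl⟩, rfl⟩
    rwa [gkey_edgeKey]
  · intro he
    exact ⟨edgeKey e, ⟨e, he, rfl⟩, gkey_edgeKey e⟩

lemma nodup_sortEdges (E : Finset (Sym2 ℕ)) : (sortEdges E).Nodup := by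
  refine List.Nodup.map_on ?_ (Finset.sort_nodup _ _)
  intro k1 h1 k2 h2 h
  rw [Finset.mem_sort, Finset.mem_image] at h1 h2
  obtain ⟨e1, _, rfl⟩ := h1
  obtain ⟨e2, _, rfl⟩ := h2
  rw [gkey_edgeKey, gkey_edgeKey] at h
  rw [h]

lemma natSort_filter (p : ℕ → Prop) [DecidablePred p] (F : Finset ℕ) :
    (F.filter p).sort (· ≤ ·) = (F.sort (· ≤ ·)).filter (fun k => decide (p k)) := by
  refine (fun h1 h2 h3 => List.Perm.eq_of_pairwise' (r := (· ≤ ·)) h2 h3 h1) ?_ ?_ ?_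
  · rw [← Multiset.coe_eq_coe, Finset.sort_eq, ← Multiset.filter_coe, Finset.sort_eq,
      Finset.filter_val]
  · exact Finset.pairwise_sort _ _
  · exact (Finset.pairwise_sort _ _).filter _

lemma sortEdges_filter (v : ℕ) (E : Finset (Sym2 ℕ)) :
    sortEdges (E.filter (fun e => v ∉ e)) = (sortEdges E).filter (fun e => decide (v ∉ e)) := by
  have himg : (E.filter (fun e => v ∉ e)).image edgeKey
      = (E.image edgeKey).filter (fun k => v ∉ s(k.unpair.1, k.unpair.2)) := by
    ext k
    simp only [Finset.mem_image, Finset.mem_filter]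
    constructor
    · rintro ⟨e, ⟨he, hv⟩, rfl⟩
      exact ⟨⟨e, he, rfl⟩, by rwa [gkey_edgeKey]⟩
    · rintro ⟨⟨e, he, rfl⟩, hv⟩
      rw [gkey_edgeKey] at hv
      exact ⟨e, ⟨he, hv⟩, rfl⟩
  rw [sortEdges, himg, natSort_filter, sortEdges, List.filter_map]
  rfl

open GraphStream

lemma mem_procList {S : GraphStream} {T : ℕ} {p : ℕ × Sym2 ℕ} :
    p ∈ S.procList T ↔ p.1 ≤ T ∧ p.2 ∈ S.edges p.1 := by
  obtain ⟨τ, e⟩ := p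
  simp only [GraphStream.procList, List.mem_flatMap, List.mem_map, List.mem_range,
    Nat.lt_succ_iff, Prod.mk.injEq]
  constructor
  · rintro ⟨τ', hτ', e', he', rfl, rfl⟩
    exact ⟨hτ', mem_sortEdges.1 he'⟩
  · rintro ⟨hτ, he⟩
    exact ⟨τ, hτ, e, mem_sortEdges.2 he, rfl, rfl⟩

lemma procList_split (S : GraphStream) {t T : ℕ} (h : t ≤ T) :
    ∃ L₂ : List (ℕ × Sym2 ℕ), S.procList T = S.procList t ++ L₂ ∧ ∀ p ∈ L₂, t < p.1 := by
  refine ⟨(List.map (fun x => t + 1 + x) (List.range (T - t))).flatMap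
    fun τ => (sortEdges (S.edges τ)).map fun e => (τ, e), ?_, ?_⟩
  · rw [GraphStream.procList, GraphStream.procList,
      show T + 1 = (t + 1) + (T - t) by omega, List.range_add, List.flatMap_append]
  · intro p hp
    simp only [List.mem_flatMap, List.mem_map, List.mem_range] at hp
    obtain ⟨τ, ⟨x, _, rfl⟩, e, _, rfl⟩ := hp
    omega

lemma procList_removeNode (S : GraphStream) (v : ℕ) (t : ℕ) :
    (S.removeNode v).procList t = (S.procList t).filter (fun p => decide (v ∉ p.2)) := by
  rw [GraphStream.procList, GraphStream.procList, List.filter_flatMap]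
  congr 1
  funext τ
  show (sortEdges ((S.edges τ).filter (fun e => v ∉ e))).map (fun e => (τ, e)) = _
  rw [sortEdges_filter, List.filter_map]
  rfl

lemma nodup_procList_snd {S : GraphStream} {T t : ℕ} (hS : S.Valid T) :
    ((S.procList t).map Prod.snd).Nodup := by
  rw [GraphStream.procList, List.map_flatMap]
  simp only [List.map_map]
  have : ∀ τ : ℕ, (List.map (Prod.snd ∘ fun e => (τ, e)) (sortEdges (S.edges τ)))
      = sortEdges (S.edges τ) := fun τ => by simp
  rw [List.nodup_flatMap]
  constructor
  · intro τ _; rw [this]; exact nodup_sortEdges _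
  · refine List.pairwise_lt_range.imp ?_
    intro a b hab
    simp only [Function.onFun, this]
    intro e he1 he2
    rw [mem_sortEdges] at he1 he2
    exact (Finset.disjoint_left.1 (hS.2.2.1 a b hab.ne)) he1 he2

lemma foldl_fst (D u : ℕ) : ∀ (L : List (ℕ × Sym2 ℕ)) (c : (ℕ → ℕ) × (ℕ → Finset (Sym2 ℕ))),
    (L.foldl (projStep D true) c).1 u = c.1 u + L.countP (fun p => decide (u ∈ p.2))
  | [], c => by simp
  | p :: L, c => by
    rw [List.foldl_cons, foldl_fst D u L, List.countP_cons]
    have h1 : (projStep D true c p).1 u = c.1 u + if u ∈ p.2 then 1 else 0 := by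
      simp only [projStep, Bool.true_or, if_true]
      by_cases h : u = (endpointsOf p.2).1 ∨ u = (endpointsOf p.2).2
      · have h2 := (mem_endpoints p.2 u).1 h
        simp [h, h2]
      · have h2 : u ∉ p.2 := fun hm => h ((mem_endpoints p.2 u).2 hm)
        simp [h, h2]
    rw [h1]
    by_cases h : u ∈ p.2 <;> simp [h] <;> omega

lemma foldl_snd_stable {D : ℕ} {b : Bool} {s : ℕ} :
    ∀ {L : List (ℕ × Sym2 ℕ)} (c : (ℕ → ℕ) × (ℕ → Finset (Sym2 ℕ))),
    (∀ p ∈ L, p.1 ≠ s) → (L.foldl (projStep D b) c).2 s = c.2 s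
  | [], c, _ => rfl
  | p :: L, c, h => by
    rw [List.foldl_cons, foldl_snd_stable _ (fun q hq => h q (List.mem_cons_of_mem _ hq))]
    simp only [projStep]
    split
    · dsimp only
      rw [if_neg (fun hs => h p (List.mem_cons_self) hs.symm)]
    · rfl

lemma foldl_snd_mem {D : ℕ} {b : Bool} {s : ℕ} {e : Sym2 ℕ} :
    ∀ {L : List (ℕ × Sym2 ℕ)} (c : (ℕ → ℕ) × (ℕ → Finset (Sym2 ℕ))),
    e ∈ (L.foldl (projStep D b) c).2 s → e ∈ c.2 s ∨ (s, e) ∈ L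
  | [], c, h => Or.inl h
  | p :: L, c, h => by
    rw [List.foldl_cons] at h
    rcases foldl_snd_mem _ h with h' | h'
    · simp only [projStep] at h'
      split at h'
      · dsimp only at h'
        by_cases hs : s = p.1
        · subst hs
          rw [if_pos rfl] at h'
          rcases Finset.mem_insert.1 h' with rfl | h''
          · exact Or.inr (List.mem_cons_self)
          · exact Or.inl h''
        · rw [if_neg hs] at h'
          exact Or.inl h'
      · exact Or.inl h'
    · exact Or.inr (List.mem_cons_of_mem _ h')


open Finset GraphStream

lemma flat_valid {S : GraphStream} {T : ℕ} (hS : S.Valid T) (t : ℕ) : (S.flat t).Valid := by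
  intro e he
  simp only [GraphStream.flat, Finset.mem_biUnion, Finset.mem_range, Nat.lt_succ_iff] at he
  obtain ⟨τ, hτ, he⟩ := he
  obtain ⟨hd, hend⟩ := hS.2.2.2 τ e he
  refine ⟨hd, fun w hw => ?_⟩
  obtain ⟨s, hs, hws⟩ := hend w hw
  simp only [GraphStream.flat, Finset.mem_biUnion, Finset.mem_range, Nat.lt_succ_iff]
  exact ⟨s, le_trans hs hτ, hws⟩

lemma mem_flat_edges {S : GraphStream} {t : ℕ} {p : ℕ × Sym2 ℕ} (hp : p ∈ S.procList t) :
    p.2 ∈ (S.flat t).edges := by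
  rw [mem_procList] at hp
  simp only [GraphStream.flat, Finset.mem_biUnion, Finset.mem_range, Nat.lt_succ_iff]
  exact ⟨p.1, hp.1, hp.2⟩

/-- The projection's edge output at time `s ≤ t` only depends on the processing
list through time `t`. -/
lemma fold_trunc (D : ℕ) (b : Bool) {S : GraphStream} {s t T : ℕ} (hst : s ≤ t) (htT : t ≤ T) :
    ((S.procList T).foldl (projStep D b) (fun _ => 0, fun _ => ∅)).2 s
      = ((S.procList t).foldl (projStep D b) (fun _ => 0, fun _ => ∅)).2 s := by
  obtain ⟨L₂, hsplit, hL₂⟩ := procList_split S htT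
  rw [hsplit, List.foldl_append]
  exact foldl_snd_stable _ (fun p hp => by have := hL₂ p hp; omega)

/-- Counter bound: when a non-heavy node's edge is processed, its counter is `< D`. -/
lemma counter_lt {S : GraphStream} {T t D : ℕ} (hS : S.Valid T) (htT : t ≤ T)
    {M : List (ℕ × Sym2 ℕ)} {p : ℕ × Sym2 ℕ} (hpre : (M ++ [p]).IsPrefix (S.procList t))
    {a : ℕ} (ha : a ∈ p.2) (hdeg : (S.flat t).degree a ≤ D) :
    (M.foldl (projStep D true) (fun _ => 0, fun _ => ∅)).1 a < D := by
  rw [foldl_fst]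
  simp only [Nat.zero_add]
  -- the list of edges of M containing a, together with p.2, is a nodup list of
  -- edges of the flattened graph containing a
  set l : List (Sym2 ℕ) := ((M.map Prod.snd).filter (fun e => decide (a ∈ e))) ++ [p.2] with hl
  have hsub : l.Sublist ((M ++ [p]).map Prod.snd) := by
    rw [List.map_append]
    exact (List.filter_sublist.append (List.Sublist.refl _))
  have hnd : l.Nodup :=
    ((hsub.trans (hpre.sublist.map Prod.snd)).nodup (nodup_procList_snd hS))
  have hmem : ∀ e ∈ l, e ∈ (S.flat t).edges.filter (fun e => a ∈ e) := by
    intro e hel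
    rcases List.mem_append.1 hel with h1 | h1
    · rw [List.mem_filter] at h1
      obtain ⟨h1, hae⟩ := h1
      obtain ⟨q, hq, rfl⟩ := List.mem_map.1 h1
      have hqproc : q ∈ S.procList t := hpre.subset (List.mem_append_left _ hq)
      exact Finset.mem_filter.2 ⟨mem_flat_edges hqproc, of_decide_eq_true hae⟩
    · rw [List.mem_singleton] at h1; subst h1
      have hp : p ∈ S.procList t := hpre.subset (List.mem_append_right _ (by simp))
      exact Finset.mem_filter.2 ⟨mem_flat_edges hp, ha⟩
  have hcard : l.length ≤ (S.flat t).degree a := by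
    rw [← List.toFinset_card_of_nodup hnd]
    exact Finset.card_le_card (fun x hx => hmem x (List.mem_toFinset.1 hx))
  have hlen : l.length = M.countP (fun p => decide (a ∈ p.2)) + 1 := by
    rw [hl, List.length_append, List.length_singleton]
    congr 1
    rw [List.filter_map, List.length_map, ← List.countP_eq_length_filter]
    rfl
  omega

lemma step_filter_stable {D : ℕ} {b : Bool} (P : Sym2 ℕ → Prop) [DecidablePred P]
    {st : (ℕ → ℕ) × (ℕ → Finset (Sym2 ℕ))} {p : ℕ × Sym2 ℕ} (hP : ¬ P p.2) (s : ℕ) :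
    ((projStep D b st p).2 s).filter P = (st.2 s).filter P := by
  simp only [projStep]
  split
  · dsimp only
    by_cases hs : s = p.1
    · rw [if_pos hs, Finset.filter_insert, if_neg hP]
    · rw [if_neg hs]
  · rfl

lemma main_invariant {S : GraphStream} {T t D : ℕ} (hS : S.Valid T) (htT : t ≤ T)
    (v : ℕ) (W₀ : Finset ℕ)
    (hW : ∀ a, a ∈ (S.flat t).verts → D < (S.flat t).degree a → a = v ∨ a ∈ W₀)
    (L₁ : List (ℕ × Sym2 ℕ)) (hpre : L₁ <+: S.procList t) (s : ℕ) :
    ((L₁.foldl (projStep D true) (fun _ => 0, fun _ => ∅)).2 s).filter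
        (fun e => v ∉ e ∧ ∀ w ∈ W₀, w ∉ e)
      = (((L₁.filter (fun p => decide (v ∉ p.2))).foldl (projStep D true)
          (fun _ => 0, fun _ => ∅)).2 s).filter (fun e => v ∉ e ∧ ∀ w ∈ W₀, w ∉ e) := by
  induction L₁ using List.reverseRecOn generalizing s with
  | nil => rfl
  | append_singleton M p ih =>
    have hpreM : M <+: S.procList t := (M.prefix_append [p]).trans hpre
    have hpp : p ∈ S.procList t := hpre.subset (List.mem_append_right _ (by simp))
    set P : Sym2 ℕ → Prop := fun e => v ∉ e ∧ ∀ w ∈ W₀, w ∉ e with hPdef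
    set stM := (M.foldl (projStep D true) (fun _ => 0, fun _ => ∅)) with hstM
    set stM' := ((M.filter (fun p => decide (v ∉ p.2))).foldl (projStep D true)
      (fun _ => 0, fun _ => ∅)) with hstM'
    rw [List.foldl_append, List.filter_append]
    by_cases hv : v ∈ p.2
    · have : List.filter (fun p => decide (v ∉ p.2)) [p] = [] := by simp [hv]
      rw [this, List.append_nil, List.foldl_cons, List.foldl_nil]
      rw [step_filter_stable P (fun hP => hP.1 hv) s]
      exact ih hpreM s
    · have : List.filter (fun p => decide (v ∉ p.2)) [p] = [p] := by simp [hv]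
      rw [this, List.foldl_append, List.foldl_cons, List.foldl_nil, List.foldl_cons,
        List.foldl_nil]
      by_cases hP : P p.2
      · -- both keep the edge
        set a := (endpointsOf p.2).1 with hadef
        set bb := (endpointsOf p.2).2 with hbdef
        have ha : a ∈ p.2 := (mem_endpoints p.2 a).1 (Or.inl rfl)
        have hb : bb ∈ p.2 := (mem_endpoints p.2 bb).1 (Or.inr rfl)
        have hdeg : ∀ x ∈ p.2, (S.flat t).degree x ≤ D := by
          intro x hx
          by_contra hgt
          have hxv : x ∈ (S.flat t).verts :=
            ((flat_valid hS t) p.2 (mem_flat_edges hpp)).2 x hx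
          rcases hW x hxv (lt_of_not_ge hgt) with rfl | hxW
          · exact hP.1 hx
          · exact hP.2 x hxW hx
        have hlta : stM.1 a < D := counter_lt hS htT hpre ha (hdeg a ha)
        have hltb : stM.1 bb < D := counter_lt hS htT hpre hb (hdeg bb hb)
        have hle : ∀ u, stM'.1 u ≤ stM.1 u := by
          intro u
          rw [hstM, hstM', foldl_fst, foldl_fst]
          exact Nat.add_le_add_left ((List.filter_sublist (l := M)).countP_le) _
        have hkeep : decide (stM.1 a < D ∧ stM.1 bb < D) = true :=
          decide_eq_true ⟨hlta, hltb⟩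
        have hkeep' : decide (stM'.1 a < D ∧ stM'.1 bb < D) = true :=
          decide_eq_true ⟨lt_of_le_of_lt (hle a) hlta, lt_of_le_of_lt (hle bb) hltb⟩
        simp only [projStep, hkeep, hkeep', if_true, Bool.true_or]
        rw [if_pos hkeep, if_pos hkeep']
        beta_reduce
        by_cases hs : s = p.1
        · rw [if_pos hs, if_pos hs, Finset.filter_insert, Finset.filter_insert,
            if_pos hP, if_pos hP, ih hpreM s]
        · rw [if_neg hs, if_neg hs, ih hpreM s]
      · rw [step_filter_stable P hP s, step_filter_stable P hP s, ih hpreM s]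


open Finset GraphStream

lemma GraphStream.ext' {A B : GraphStream} (h1 : ∀ s, A.nodes s = B.nodes s)
    (h2 : ∀ s, A.edges s = B.edges s) : A = B := by
  cases A; cases B
  simp only [GraphStream.mk.injEq]
  exact ⟨funext h1, funext h2⟩

/-- Remove a list of nodes from a stream. -/
def removeListS (l : List ℕ) (Z : GraphStream) : GraphStream :=
  l.foldl GraphStream.removeNode Z

lemma removeListS_append (l₁ l₂ : List ℕ) (Z : GraphStream) :
    removeListS (l₁ ++ l₂) Z = removeListS l₂ (removeListS l₁ Z) :=
  List.foldl_append

lemma removeListS_nodes : ∀ (l : List ℕ) (Z : GraphStream) (s : ℕ),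
    (removeListS l Z).nodes s = (Z.nodes s) \ l.toFinset
  | [], Z, s => by simp [removeListS]
  | a :: l, Z, s => by
    show (removeListS l (Z.removeNode a)).nodes s = _
    rw [removeListS_nodes l]
    show (Z.nodes s).erase a \ l.toFinset = _
    rw [Finset.erase_eq, sdiff_sdiff, List.toFinset_cons, Finset.insert_eq]
    rfl

lemma removeListS_edges : ∀ (l : List ℕ) (Z : GraphStream) (s : ℕ),
    (removeListS l Z).edges s = (Z.edges s).filter (fun e => ∀ w ∈ l, w ∉ e)
  | [], Z, s => by simp [removeListS]
  | a :: l, Z, s => by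
    show (removeListS l (Z.removeNode a)).edges s = _
    rw [removeListS_edges l]
    show ((Z.edges s).filter (fun e => a ∉ e)).filter _ = _
    rw [Finset.filter_filter]
    ext e
    simp only [Finset.mem_filter, List.forall_mem_cons]

lemma removeNode_valid {S : GraphStream} {T : ℕ} (hS : S.Valid T) (v : ℕ) :
    (S.removeNode v).Valid T := by
  obtain ⟨h1, h2, h3, h4⟩ := hS
  refine ⟨?_, ?_, ?_, ?_⟩
  · intro τ hne
    apply h1 τ
    rcases hne with hn | he
    · exact Or.inl (hn.mono (Finset.erase_subset _ _))
    · exact Or.inr (he.mono (Finset.filter_subset _ _))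
  · intro s τ hst
    exact (h2 s τ hst).mono (Finset.erase_subset _ _) (Finset.erase_subset _ _)
  · intro s τ hst
    exact (h3 s τ hst).mono (Finset.filter_subset _ _) (Finset.filter_subset _ _)
  · intro τ e he
    have he' : e ∈ (S.edges τ).filter (fun e => v ∉ e) := he
    rw [Finset.mem_filter] at he'
    obtain ⟨he, hv⟩ := he'
    refine ⟨(h4 τ e he).1, fun w hw => ?_⟩
    obtain ⟨s, hs, hws⟩ := (h4 τ e he).2 w hw
    refine ⟨s, hs, Finset.mem_erase.2 ⟨fun hwv => hv (hwv ▸ hw), hws⟩⟩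

lemma proj_trunc_edges_subset {S : GraphStream} {D T : ℕ} {b : Bool} {s : ℕ} {e : Sym2 ℕ}
    (he : e ∈ (project b D T S).edges s) : e ∈ S.edges s := by
  rcases foldl_snd_mem _ he with h | h
  · exact absurd h (Finset.notMem_empty e)
  · exact (mem_procList.1 h).2

lemma proj_trunc_valid {S : GraphStream} {D T t : ℕ} (hS : S.Valid T) (htT : t ≤ T)
    (b : Bool) : ((project b D T S).trunc t).Valid t := by
  have hnodes : ∀ s, ((project b D T S).trunc t).nodes s = if s ≤ t then S.nodes s else ∅ :=
    fun s => rfl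
  have hedges : ∀ s, ((project b D T S).trunc t).edges s
      ⊆ (if s ≤ t then S.edges s else ∅) := by
    intro s e he
    show e ∈ if s ≤ t then S.edges s else ∅
    unfold GraphStream.trunc at he
    dsimp only at he
    split at he
    · rw [if_pos (by assumption)]
      exact proj_trunc_edges_subset he
    · exact absurd he (Finset.notMem_empty e)
  refine ⟨?_, ?_, ?_, ?_⟩
  · intro τ hne
    by_cases hτ : τ ≤ t
    · rcases hne with hn | he
      · rw [hnodes, if_pos hτ] at hn
        exact ⟨(hS.1 τ (Or.inl hn)).1, hτ⟩
      · have := he.mono (hedges τ)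
        rw [if_pos hτ] at this
        exact ⟨(hS.1 τ (Or.inr this)).1, hτ⟩
    · exfalso
      rcases hne with hn | he
      · rw [hnodes, if_neg hτ] at hn
        exact Finset.not_nonempty_empty hn
      · have := he.mono (hedges τ)
        rw [if_neg hτ] at this
        exact Finset.not_nonempty_empty this
  · intro s τ hst
    rw [Finset.disjoint_left]
    intro w hws hwτ
    rw [hnodes] at hws hwτ
    split at hws
    · split at hwτ
      · exact Finset.disjoint_left.1 (hS.2.1 s τ hst) hws hwτ
      · exact Finset.notMem_empty w hwτ
    · exact Finset.notMem_empty w hws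
  · intro s τ hst
    rw [Finset.disjoint_left]
    intro e hes heτ
    have h1 := hedges s hes
    have h2 := hedges τ heτ
    split at h1
    · split at h2
      · exact Finset.disjoint_left.1 (hS.2.2.1 s τ hst) h1 h2
      · exact Finset.notMem_empty e h2
    · exact Finset.notMem_empty e h1
  · intro τ e he
    have h1 := hedges τ he
    by_cases hτ : τ ≤ t
    · rw [if_pos hτ] at h1
      refine ⟨(hS.2.2.2 τ e h1).1, fun w hw => ?_⟩
      obtain ⟨s, hs, hws⟩ := (hS.2.2.2 τ e h1).2 w hw
      exact ⟨s, hs, by rw [hnodes, if_pos (le_trans hs hτ)]; exact hws⟩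
    · rw [if_neg hτ] at h1
      exact absurd h1 (Finset.notMem_empty e)

lemma removeListS_valid {t : ℕ} : ∀ (l : List ℕ) {Z : GraphStream},
    Z.Valid t → (removeListS l Z).Valid t
  | [], _, h => h
  | a :: l, Z, h => removeListS_valid l (removeNode_valid h a)

lemma proj_nodes (b : Bool) (D T : ℕ) (S : GraphStream) :
    (project b D T S).nodes = S.nodes := rfl

lemma trunc_nodes (Z : GraphStream) (t s : ℕ) :
    (Z.trunc t).nodes s = if s ≤ t then Z.nodes s else ∅ := rfl

lemma trunc_edges (Z : GraphStream) (t s : ℕ) :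
    (Z.trunc t).edges s = if s ≤ t then Z.edges s else ∅ := rfl

lemma proj_edges (b : Bool) (D T : ℕ) (S : GraphStream) (s : ℕ) :
    (project b D T S).edges s
      = ((S.procList T).foldl (projStep D b) (fun _ => 0, fun _ => ∅)).2 s := rfl

/-- The key equality: removing the heavy nodes and `v` from the projection of `S`
yields the same stream as removing the heavy nodes from the projection of
`S.removeNode v`. -/
lemma key_eq {S : GraphStream} {T t D : ℕ} (hS : S.Valid T) (htT : t ≤ T)
    (v : ℕ) (W₀ : Finset ℕ)
    (hW : ∀ a, a ∈ (S.flat t).verts → D < (S.flat t).degree a → a = v ∨ a ∈ W₀) :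
    removeListS (W₀.toList ++ [v]) ((projBBDS D T S).trunc t)
      = removeListS W₀.toList ((projBBDS D T (S.removeNode v)).trunc t) := by
  apply GraphStream.ext'
  · intro s
    simp only [projBBDS]
    rw [removeListS_nodes, removeListS_nodes, trunc_nodes, trunc_nodes,
      proj_nodes, proj_nodes]
    by_cases hs : s ≤ t
    · rw [if_pos hs, if_pos hs]
      show S.nodes s \ _ = (S.nodes s).erase v \ W₀.toList.toFinset
      rw [List.toFinset_append, Finset.erase_eq, sdiff_sdiff]
      congr 1
      simp [Finset.union_comm]
    · rw [if_neg hs, if_neg hs, Finset.empty_sdiff, Finset.empty_sdiff]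
  · intro s
    simp only [projBBDS]
    rw [removeListS_edges, removeListS_edges, trunc_edges, trunc_edges]
    by_cases hs : s ≤ t
    · rw [if_pos hs, if_pos hs, proj_edges, proj_edges,
        fold_trunc D true hs htT, fold_trunc D true hs htT]
      set Et := ((S.procList t).foldl (projStep D true) (fun _ => 0, fun _ => ∅)).2 s
        with hEt
      set Et' := (((S.removeNode v).procList t).foldl (projStep D true)
        (fun _ => 0, fun _ => ∅)).2 s with hEt'
      have hinv : Et.filter (fun e => v ∉ e ∧ ∀ w ∈ W₀, w ∉ e)
          = Et'.filter (fun e => v ∉ e ∧ ∀ w ∈ W₀, w ∉ e) := by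
        rw [hEt, hEt', procList_removeNode]
        exact main_invariant hS htT v W₀ hW _ (List.prefix_refl _) s
      have hvfree : ∀ e ∈ Et', v ∉ e := by
        intro e he
        rcases foldl_snd_mem _ he with h | h
        · exact absurd h (Finset.notMem_empty e)
        · have := (mem_procList.1 h).2
          have : e ∈ (S.edges s).filter (fun e => v ∉ e) := this
          exact (Finset.mem_filter.1 this).2
      have h1 : Et.filter (fun e => ∀ w ∈ W₀.toList ++ [v], w ∉ e)
          = Et.filter (fun e => v ∉ e ∧ ∀ w ∈ W₀, w ∉ e) := by
        ext e
        simp only [Finset.mem_filter, List.mem_append, List.mem_singleton,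
          Finset.mem_toList]
        constructor
        · rintro ⟨he, h⟩
          exact ⟨he, h v (Or.inr rfl), fun w hw => h w (Or.inl hw)⟩
        · rintro ⟨he, hv, h⟩
          exact ⟨he, fun w hw => hw.elim (h w) (fun hwv => hwv ▸ hv)⟩
      have h2 : Et'.filter (fun e => ∀ w ∈ W₀.toList, w ∉ e)
          = Et'.filter (fun e => v ∉ e ∧ ∀ w ∈ W₀, w ∉ e) := by
        ext e
        simp only [Finset.mem_filter, Finset.mem_toList]
        constructor
        · rintro ⟨he, h⟩
          exact ⟨he, hvfree e he, h⟩
        · rintro ⟨he, _, h⟩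
          exact ⟨he, h⟩
      rw [h1, h2, hinv]
    · rw [if_neg hs, if_neg hs, Finset.filter_empty, Finset.filter_empty]

/-- If `v` arrives after time `t`, the truncated projections agree. -/
lemma late_arrival_eq {S : GraphStream} {T t D : ℕ} (hS : S.Valid T) (htT : t ≤ T)
    {v : ℕ} (hv : ∀ s ≤ t, v ∉ S.nodes s) :
    (projBBDS D T S).trunc t = (projBBDS D T (S.removeNode v)).trunc t := by
  have hfree : ∀ p ∈ S.procList t, v ∉ p.2 := by
    intro p hp hvp
    rw [mem_procList] at hp
    obtain ⟨s, hs, hvs⟩ := (hS.2.2.2 p.1 p.2 hp.2).2 v hvp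
    exact hv s (le_trans hs hp.1) hvs
  have hproc : (S.removeNode v).procList t = S.procList t := by
    rw [procList_removeNode]
    exact List.filter_eq_self.2 (fun p hp => decide_eq_true (hfree p hp))
  apply GraphStream.ext'
  · intro s
    simp only [projBBDS]
    rw [trunc_nodes, trunc_nodes, proj_nodes, proj_nodes]
    by_cases hs : s ≤ t
    · rw [if_pos hs, if_pos hs]
      exact (Finset.erase_eq_of_notMem (hv s hs)).symm
    · rw [if_neg hs, if_neg hs]
  · intro s
    simp only [projBBDS]
    rw [trunc_edges, trunc_edges]
    by_cases hs : s ≤ t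
    · rw [if_pos hs, if_pos hs, proj_edges, proj_edges,
        fold_trunc D true hs htT, fold_trunc D true hs htT, hproc]
    · rw [if_neg hs, if_neg hs]


open Finset GraphStream

lemma key_chain {T D ℓ t : ℕ} {S : GraphStream} (v : ℕ) (hS : S.Valid T)
    (ht : t ≤ T) (hb : S.DLBoundedThrough D ℓ t) :
    ∃ n ≤ 2*ℓ+1, ∃ f : ℕ → GraphStream,
      f 0 = (projBBDS D T S).trunc t ∧ f n = (projBBDS D T (S.removeNode v)).trunc t ∧
      (∀ i ≤ n, (f i).Valid t) ∧ ∀ i < n, nodeNeighborStream (f i) (f (i + 1)) := by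
  by_cases hvt : ∃ τ ≤ t, v ∈ S.nodes τ
  case neg =>
    refine ⟨0, by omega, fun _ => (projBBDS D T S).trunc t, rfl,
      late_arrival_eq hS ht (fun s hs hv => hvt ⟨s, hs, hv⟩),
      fun i _ => proj_trunc_valid hS ht true,
      fun i hi => absurd hi (Nat.not_lt_zero i)⟩
  case pos =>
    obtain ⟨τv, hτv, hvτ⟩ := hvt
    set W₀ : Finset ℕ :=
      ((S.flat t).verts.filter (fun a => D < (S.flat t).degree a)).erase v with hW₀
    have hk : W₀.card ≤ ℓ := le_trans (Finset.card_erase_le) hb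
    set l := W₀.toList with hl
    set k := l.length with hkdef
    have hkl : k ≤ ℓ := by rw [hkdef, hl, Finset.length_toList]; exact hk
    have hnd : l.Nodup := Finset.nodup_toList _
    have hWhyp : ∀ a, a ∈ (S.flat t).verts → D < (S.flat t).degree a → a = v ∨ a ∈ W₀ := by
      intro a ha hda
      by_cases hav : a = v
      · exact Or.inl hav
      · exact Or.inr (Finset.mem_erase.2 ⟨hav, Finset.mem_filter.2 ⟨ha, hda⟩⟩)
    have hWmem : ∀ w ∈ W₀, (∃ τ ≤ t, w ∈ S.nodes τ) ∧ w ≠ v := by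
      intro w hw
      have h1 := Finset.mem_erase.1 hw
      have h2 := (Finset.mem_filter.1 h1.2).1
      simp only [GraphStream.flat, Finset.mem_biUnion, Finset.mem_range,
        Nat.lt_succ_iff] at h2
      exact ⟨h2, h1.1⟩
    set A := (projBBDS D T S).trunc t with hA
    set B := (projBBDS D T (S.removeNode v)).trunc t with hB
    have hAvalid : A.Valid t := proj_trunc_valid hS ht true
    have hBvalid : B.Valid t := proj_trunc_valid (removeNode_valid hS v) ht true
    have hkey : (removeListS l A).removeNode v = removeListS l B := by
      have h := key_eq hS ht v W₀ hWhyp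
      rw [removeListS_append] at h
      exact h
    have hstep : ∀ (Z : GraphStream) (m : ℕ) (hm : m < k),
        removeListS (l.take (m+1)) Z = (removeListS (l.take m) Z).removeNode l[m] := by
      intro Z m hm
      rw [List.take_succ, List.getElem?_eq_getElem hm, Option.toList_some,
        removeListS_append]
      rfl
    have hnotmem : ∀ (m : ℕ) (hm : m < k), l[m] ∉ (l.take m).toFinset := by
      intro m hm hmem
      have h1 : (l.take m ++ [l[m]]).Nodup := by
        rw [← Option.toList_some l[m], ← List.getElem?_eq_getElem hm, ← List.take_succ]
        exact (List.take_sublist _ _).nodup hnd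
      have h2 := (List.nodup_append.1 h1).2.2
      exact h2 _ (List.mem_toFinset.1 hmem) _ (List.mem_singleton.2 rfl) rfl
    have hmemW : ∀ (m : ℕ) (hm : m < k), l[m] ∈ W₀ := by
      intro m hm
      rw [← Finset.mem_toList, ← hl]
      exact List.getElem_mem hm
    refine ⟨2*k+1, by omega,
      fun i => if i ≤ k then removeListS (l.take i) A else removeListS (l.take (2*k+1-i)) B,
      ?_, ?_, ?_, ?_⟩
    · simp [removeListS]
    · have h1 : ¬ (2*k+1 ≤ k) := by omega
      have h2 : 2*k+1 - (2*k+1) = 0 := by omega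
      simp only [h1, if_false, h2, List.take_zero]
      rfl
    · intro i _
      dsimp only
      split
      · exact removeListS_valid _ hAvalid
      · exact removeListS_valid _ hBvalid
    · intro i hi
      dsimp only
      rcases lt_trichotomy i k with hik | hik | hik
      · -- removing heavy node i from the A side
        rw [if_pos (le_of_lt hik), if_pos (show i + 1 ≤ k from hik), hstep A i hik]
        refine Or.inl ⟨l[i], ?_, rfl⟩
        obtain ⟨⟨τ, hτ, hwτ⟩, _⟩ := hWmem l[i] (hmemW i hik)
        refine ⟨τ, ?_⟩
        rw [removeListS_nodes]
        refine Finset.mem_sdiff.2 ⟨?_, hnotmem i hik⟩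
        rw [hA]
        show l[i] ∈ if τ ≤ t then S.nodes τ else ∅
        rw [if_pos hτ]
        exact hwτ
      · -- removing v in the middle
        have h1 : i ≤ k := le_of_eq hik
        have h2 : ¬ (i + 1 ≤ k) := by omega
        have h3 : 2*k+1 - (i+1) = k := by omega
        have h4 : l.take i = l := by rw [hik, hkdef]; exact List.take_length
        have h5 : l.take (2*k+1-(i+1)) = l := by rw [h3, hkdef]; exact List.take_length
        rw [if_pos h1, if_neg h2, h4, h5, ← hkey]
        refine Or.inl ⟨v, ⟨τv, ?_⟩, rfl⟩
        rw [removeListS_nodes]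
        refine Finset.mem_sdiff.2 ⟨?_, ?_⟩
        · rw [hA]
          show v ∈ if τv ≤ t then S.nodes τv else ∅
          rw [if_pos hτv]
          exact hvτ
        · rw [hl, Finset.toList_toFinset]
          exact Finset.notMem_erase v _
      · -- adding heavy nodes back on the B side
        have h1 : ¬ (i ≤ k) := by omega
        have h2 : ¬ (i + 1 ≤ k) := by omega
        set m := 2*k - i with hm
        have hmk : m < k := by omega
        have e1 : 2*k+1 - i = m + 1 := by omega
        have e2 : 2*k+1 - (i+1) = m := by omega
        rw [if_neg h1, if_neg h2, e1, e2, hstep B m hmk]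
        refine Or.inr ⟨l[m], ?_, rfl⟩
        obtain ⟨⟨τ, hτ, hwτ⟩, hwv⟩ := hWmem l[m] (hmemW m hmk)
        refine ⟨τ, ?_⟩
        rw [removeListS_nodes]
        refine Finset.mem_sdiff.2 ⟨?_, hnotmem m hmk⟩
        rw [hB]
        show l[m] ∈ if τ ≤ t then (S.nodes τ).erase v else ∅
        rw [if_pos hτ]
        exact Finset.mem_erase.2 ⟨hwv, hwτ⟩

end BBDSAux

/-- node-to-node stability of the BBDS projection.
For every pair of node-neighboring insertion-only graph streams `S, S'` of length `T`
and every time step `t ∈ [T]` such that both streams are `(D, ℓ)`-bounded through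
time `t`, the node distance between the BBDS-projected streams through time `t` is at
most `2ℓ + 1`. -/
theorem bbds_node_to_node_stability (T D ℓ : ℕ) (S S' : GraphStream)
    (hS : S.Valid T) (hS' : S'.Valid T) (hnb : nodeNeighborStream S S')
    (t : ℕ) (ht1 : 1 ≤ t) (htT : t ≤ T)
    (hbS : S.DLBoundedThrough D ℓ t) (hbS' : S'.DLBoundedThrough D ℓ t) :
    streamNodeDist t ((projBBDS D T S).trunc t) ((projBBDS D T S').trunc t) ≤ 2 * ℓ + 1 := by
  rcases hnb with h | h
  · obtain ⟨v, hvS, rfl⟩ := h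
    obtain ⟨n, hn, f, hf0, hfn, hval, hstep⟩ := key_chain (T := T) v hS htT hbS
    exact le_trans (Nat.sInf_le ⟨f, hf0, hfn, hval, hstep⟩) (by omega)
  · obtain ⟨v, hvS', rfl⟩ := h
    obtain ⟨n, hn, f, hf0, hfn, hval, hstep⟩ := key_chain (T := T) v hS' htT hbS'
    have hd : streamNodeDist t ((projBBDS D T (S'.removeNode v)).trunc t)
        ((projBBDS D T S').trunc t) ≤ n :=
      Nat.sInf_le ⟨fun i => f (n - i), ?_, ?_, ?_, ?_⟩
    · omega
    · simpa using hfn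
    · simpa using hf0
    · intro i _
      exact hval (n - i) (Nat.sub_le n i)
    · intro i hi
      have hj : (n - i) = (n - (i+1)) + 1 := by omega
      have hh := hstep (n - (i+1)) (by omega)
      rw [← hj] at hh
      exact Or.symm hh
end
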